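/- arXiv:2605.02420 — 2 statements merged into one kernel-verified Lean document; each statement's English description precedes it below -/
import Mathlib

section
/- Let β ∈ (0,1), K > 0, c > 0, θ₁, θ₂ ≥ 0, r > 0, and let (r_n) be a sequence of positive numbers with r_n → r. Set f_n = θ₁ 1_{[0,r_n]} + θ₂ 1_{[0,r]} and f = (θ₁+θ₂) 1_{[0,r]}, and let v_n and v be the unique bounded nonnegative compactly supported Borel solutions of equation (E) with data f_n and f respectively. Then sup_{t≥0} |v_n(t) − v(t)| → 0 as n → ∞, and in particular ∫_0^∞ v_n(t) dt → ∫_0^∞ v(t) dt. -/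
set_option autoImplicit false
set_option maxHeartbeats 2000000

open MeasureTheory Filter Set

private lemma st18_rpow_add_le {β : ℝ} (hβ0 : 0 < β) (hβ1 : β ≤ 1) {x y : ℝ}
    (hx : 0 ≤ x) (hy : 0 ≤ y) : (x + y) ^ β ≤ x ^ β + y ^ β := by
  have h := NNReal.coe_le_coe.2
    (NNReal.rpow_add_le_add_rpow x.toNNReal y.toNNReal hβ0.le hβ1)
  simpa [NNReal.coe_rpow, Real.coe_toNNReal x hx, Real.coe_toNNReal y hy] using h

private lemma st18_J_meas {β : ℝ} : Measurable fun s : ℝ => s ^ (β - 1) := by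
  fun_prop

private lemma st18_J_nonneg {β : ℝ} {s : ℝ} (hs : 0 ≤ s) : 0 ≤ s ^ (β - 1) :=
  Real.rpow_nonneg hs _

private lemma st18_J_intOn {β : ℝ} (hβ0 : 0 < β) (a : ℝ) :
    IntegrableOn (fun s : ℝ => s ^ (β - 1)) (Ioc 0 a) := by
  rcases le_or_gt a 0 with h | h
  · rw [Ioc_eq_empty (not_lt.2 h)]; exact integrableOn_empty
  · have h1 : IntervalIntegrable (fun s : ℝ => s ^ (β - 1)) volume 0 a :=
      intervalIntegral.intervalIntegrable_rpow' (by linarith)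
    rw [intervalIntegrable_iff, uIoc_of_le h.le] at h1
    exact h1

open intervalIntegral in
private lemma st18_J_int {β : ℝ} (hβ0 : 0 < β) {a : ℝ} (ha : 0 ≤ a) :
    ∫ s in Ioc (0:ℝ) a, s ^ (β - 1) = a ^ β / β := by
  rw [← integral_of_le ha, integral_rpow (Or.inl (by linarith))]
  have h1 : β - 1 + 1 = β := by ring
  rw [h1, Real.zero_rpow hβ0.ne', sub_zero]

open intervalIntegral in
private lemma st18_J_int_shift {β : ℝ} (hβ0 : 0 < β) (hβ1 : β < 1) {p δ : ℝ}
    (hp : 0 ≤ p) (hδ : 0 ≤ δ) :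
    ∫ s in Ioc p (p + δ), s ^ (β - 1) ≤ δ ^ β / β := by
  rw [← integral_of_le (by linarith : p ≤ p + δ), integral_rpow (Or.inl (by linarith))]
  have h1 : β - 1 + 1 = β := by ring
  rw [h1]
  have h2 : (p + δ) ^ β ≤ p ^ β + δ ^ β := st18_rpow_add_le hβ0 hβ1.le hp hδ
  have h3 : (p + δ) ^ β - p ^ β ≤ δ ^ β := by linarith
  exact (div_le_div_iff_of_pos_right hβ0).mpr h3

private lemma st18_dom_int {β : ℝ} (hβ0 : 0 < β) (C : ℝ) {p q : ℝ} (hp : 0 ≤ p) :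
    Integrable (fun s => (Ioc p q).indicator (fun s' => C * s' ^ (β - 1)) s)
      (volume.restrict (Ioi (0:ℝ))) := by
  have h : IntegrableOn (fun s' : ℝ => C * s' ^ (β - 1)) (Ioc p q) := by
    apply IntegrableOn.mono_set ((st18_J_intOn hβ0 (max q 0)).const_mul C)
    intro x hx
    simp only [mem_Ioc] at hx ⊢
    exact ⟨hp.trans_lt hx.1, le_max_of_le_left hx.2⟩
  exact (h.integrable_indicator measurableSet_Ioc).restrict

private lemma st18_dom_int_eq {β : ℝ} (hβ0 : 0 < β) (C : ℝ) {p q : ℝ} (hp : 0 ≤ p) :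
    ∫ s in Ioi (0:ℝ), (Ioc p q).indicator (fun s' => C * s' ^ (β - 1)) s
      = C * ∫ s in Ioc p q, s ^ (β - 1) := by
  rw [setIntegral_indicator measurableSet_Ioc]
  have h : Ioi 0 ∩ Ioc p q = Ioc p q := inter_eq_right.mpr
    (fun x hx => hp.trans_lt hx.1)
  rw [h, MeasureTheory.integral_const_mul]

private lemma st18_comp_intOn {β : ℝ} (hβ0 : 0 < β) {g : ℝ → ℝ} (hg : Measurable g)
    {Mg Rg : ℝ} (hb : ∀ u, 0 < u → |g u| ≤ Mg) (h0 : ∀ u, Rg < u → g u = 0)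
    {t : ℝ} (ht : 0 ≤ t) :
    IntegrableOn (fun s => g (t + s) * s ^ (β - 1)) (Ioi (0:ℝ)) := by
  apply Integrable.mono' (st18_dom_int hβ0 (p := 0) (q := Rg) Mg le_rfl)
  · exact ((hg.comp (measurable_const.add measurable_id)).mul st18_J_meas).aestronglyMeasurable
  · refine (ae_restrict_iff' measurableSet_Ioi).mpr (ae_of_all _ fun s hs => ?_)
    have hs0 : 0 < s := hs
    by_cases hcase : s ≤ Rg
    · rw [indicator_of_mem (show s ∈ Ioc (0:ℝ) Rg from ⟨hs0, hcase⟩)]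
      rw [Real.norm_eq_abs, abs_mul, abs_of_nonneg (st18_J_nonneg hs0.le)]
      exact mul_le_mul_of_nonneg_right (hb _ (by linarith)) (st18_J_nonneg hs0.le)
    · push_neg at hcase
      rw [indicator_of_notMem (fun hmem : s ∈ Ioc (0:ℝ) Rg => absurd hmem.2 (not_le.2 hcase)),
        h0 _ (by linarith), zero_mul, norm_zero]

private lemma st18_mvt {β M x y : ℝ} (hβ0 : 0 < β)
    (hx : x ∈ Icc 0 M) (hy : y ∈ Icc 0 M) :
    |x ^ (1+β) - y ^ (1+β)| ≤ ((1+β) * M ^ β) * |x - y| := by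
  have hd : ∀ z ∈ Icc (0:ℝ) M, HasDerivWithinAt (fun u : ℝ => u ^ (1+β))
      ((1+β) * z ^ β) (Icc 0 M) z := by
    intro z hz
    have h := (Real.hasDerivAt_rpow_const (x := z) (p := 1+β)
      (Or.inr (by linarith))).hasDerivWithinAt (s := Icc 0 M)
    have hee : 1 + β - 1 = β := by ring
    rwa [hee] at h
  have hb : ∀ z ∈ Icc (0:ℝ) M, ‖(1+β) * z ^ β‖ ≤ (1+β) * M ^ β := by
    intro z hz
    rw [Real.norm_eq_abs, abs_mul, abs_of_nonneg (by linarith : (0:ℝ) ≤ 1+β),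
      abs_of_nonneg (Real.rpow_nonneg hz.1 _)]
    exact mul_le_mul_of_nonneg_left (Real.rpow_le_rpow hz.1 hz.2 hβ0.le) (by linarith)
  have h := Convex.norm_image_sub_le_of_norm_hasDerivWithin_le hd hb
    (convex_Icc (0:ℝ) M) hy hx
  simpa [Real.norm_eq_abs] using h

private theorem st18_est (β K c Θ R : ℝ) (hβ0 : 0 < β) (hβ1 : β < 1)
    (hK : 0 < K) (hc : 0 < c) (hΘ : 0 ≤ Θ) (hR : 0 < R) :
    ∃ C : ℝ, 0 < C ∧ ∀ (f₁ f₂ v₁ v₂ : ℝ → ℝ) (M₁ M₂ B₁ B₂ D : ℝ),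
      Measurable f₁ → Measurable f₂ → Measurable v₁ → Measurable v₂ →
      (∀ u, 0 ≤ f₁ u) → (∀ u, 0 ≤ f₂ u) → (∀ u, f₁ u ≤ Θ) → (∀ u, f₂ u ≤ Θ) →
      (∀ u, R < u → f₁ u = 0) → (∀ u, R < u → f₂ u = 0) →
      (∀ u, 0 ≤ v₁ u) → (∀ u, 0 ≤ v₂ u) → (∀ u, v₁ u ≤ M₁) → (∀ u, v₂ u ≤ M₂) →
      (∀ u, B₁ < u → v₁ u = 0) → (∀ u, B₂ < u → v₂ u = 0) →
      (∀ t, 0 ≤ t → v₁ t = β * c * ∫ s in Set.Ioi (0:ℝ),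
        (f₁ (t+s) - K * v₁ (t+s) ^ (1+β)) * s ^ (β-1)) →
      (∀ t, 0 ≤ t → v₂ t = β * c * ∫ s in Set.Ioi (0:ℝ),
        (f₂ (t+s) - K * v₂ (t+s) ^ (1+β)) * s ^ (β-1)) →
      (∀ t, 0 ≤ t → (∫ s in Set.Ioi (0:ℝ), |f₁ (t+s) - f₂ (t+s)| * s ^ (β-1)) ≤ D) →
      (∀ u, R < u → v₁ u = 0) ∧ ∀ t, 0 ≤ t → |v₁ t - v₂ t| ≤ C * D := by
  set M : ℝ := β * c * (Θ * (R ^ β / β)) with hMdef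
  have hM0 : 0 ≤ M := by positivity
  set L : ℝ := β * c * (K * ((1+β) * M ^ β)) with hLdef
  have hL0 : 0 ≤ L := by positivity
  -- choose the weight `lam`
  have hIto : Tendsto (fun m : ℕ => ∫ s in Ioc (0:ℝ) R, Real.exp (-(m:ℝ) * s) * s ^ (β-1))
      atTop (nhds 0) := by
    have h := tendsto_integral_of_dominated_convergence
      (μ := volume.restrict (Ioc (0:ℝ) R))
      (F := fun m : ℕ => fun s => Real.exp (-(m:ℝ)*s) * s ^ (β-1))
      (f := fun _ => (0:ℝ)) (fun s => s ^ (β-1)) ?_ ?_ ?_ ?_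
    · simpa using h
    · intro m
      exact ((Real.continuous_exp.comp (continuous_const.mul continuous_id)).measurable.mul
        st18_J_meas).aestronglyMeasurable
    · exact st18_J_intOn hβ0 R
    · intro m
      refine (ae_restrict_iff' measurableSet_Ioc).mpr (ae_of_all _ fun s hs => ?_)
      rw [Real.norm_eq_abs, abs_mul, abs_of_nonneg (Real.exp_pos _).le,
        abs_of_nonneg (st18_J_nonneg hs.1.le)]
      have h1 : Real.exp (-(m:ℝ)*s) ≤ 1 := by
        rw [← Real.exp_zero]
        apply Real.exp_le_exp.mpr
        have : (0:ℝ) ≤ (m:ℝ) := Nat.cast_nonneg m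
        nlinarith [hs.1]
      nlinarith [st18_J_nonneg (β := β) hs.1.le, Real.exp_pos (-(m:ℝ)*s)]
    · refine (ae_restrict_iff' measurableSet_Ioc).mpr (ae_of_all _ fun s hs => ?_)
      have h1 : Tendsto (fun m : ℕ => Real.exp (-(m:ℝ)*s)) atTop (nhds 0) := by
        have heq : (fun m : ℕ => Real.exp (-(m:ℝ)*s)) = fun m : ℕ => (Real.exp (-s))^m := by
          funext m
          rw [← Real.exp_nat_mul]
          ring_nf
        rw [heq]
        exact tendsto_pow_atTop_nhds_zero_of_lt_one (Real.exp_pos _).le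
          (Real.exp_lt_one_iff.mpr (by linarith [hs.1]))
      simpa using h1.mul_const (s ^ (β-1))
  have hev : ∀ᶠ m : ℕ in atTop,
      L * (∫ s in Ioc (0:ℝ) R, Real.exp (-(m:ℝ)*s) * s^(β-1)) < 1/2 := by
    have h2 := hIto.const_mul L
    rw [mul_zero] at h2
    exact h2.eventually_lt_const (by norm_num)
  obtain ⟨m, hm⟩ := hev.exists
  set lam : ℝ := (m:ℝ) with hlamdef
  have hlam0 : (0:ℝ) ≤ lam := Nat.cast_nonneg m
  set Im : ℝ := ∫ s in Ioc (0:ℝ) R, Real.exp (-lam*s) * s^(β-1) with hImdef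
  have hIm0 : 0 ≤ Im := setIntegral_nonneg measurableSet_Ioc
    (fun s hs => mul_nonneg (Real.exp_pos _).le (st18_J_nonneg hs.1.le))
  have hmIm : L * Im ≤ 1/2 := hm.le
  refine ⟨2 * Real.exp (lam * R) * (β * c), by positivity, ?_⟩
  intro f₁ f₂ v₁ v₂ M₁ M₂ B₁ B₂ D hf₁m hf₂m hv₁m hv₂m hf₁0 hf₂0 hf₁Θ hf₂Θ hf₁s hf₂s
    hv₁0 hv₂0 hv₁M hv₂M hv₁s hv₂s heq₁ heq₂ hD
  -- generic facts about a solution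
  have key : ∀ (f w : ℝ → ℝ) (Mw Bw : ℝ), Measurable f → Measurable w →
      (∀ u, 0 ≤ f u) → (∀ u, f u ≤ Θ) → (∀ u, R < u → f u = 0) →
      (∀ u, 0 ≤ w u) → (∀ u, w u ≤ Mw) → (∀ u, Bw < u → w u = 0) →
      (∀ t, 0 ≤ t → w t = β * c * ∫ s in Set.Ioi (0:ℝ),
        (f (t+s) - K * w (t+s) ^ (1+β)) * s ^ (β-1)) →
      (∀ t, 0 ≤ t → IntegrableOn
          (fun s => (f (t+s) - K * w (t+s) ^ (1+β)) * s ^ (β-1)) (Ioi (0:ℝ)))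
        ∧ (∀ u, R < u → w u = 0) ∧ (∀ u, 0 ≤ u → w u ≤ M) := by
    intro f w Mw Bw hfm hwm hf0 hfΘ hfs hw0 hwM hws heq
    have hMw0 : 0 ≤ Mw := (hw0 0).trans (hwM 0)
    have h1β : (0:ℝ) < 1 + β := by linarith
    have hg : Measurable fun u => f u - K * w u ^ (1+β) := by fun_prop
    have hgb : ∀ u, 0 < u → |f u - K * w u ^ (1+β)| ≤ Θ + K * Mw ^ (1+β) := by
      intro u hu
      have h1 : 0 ≤ w u ^ (1+β) := Real.rpow_nonneg (hw0 u) _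
      have h2 : w u ^ (1+β) ≤ Mw ^ (1+β) := Real.rpow_le_rpow (hw0 u) (hwM u) h1β.le
      rw [abs_le]
      constructor <;> nlinarith [hf0 u, hfΘ u, hK.le]
    have hgs : ∀ u, max R Bw < u → f u - K * w u ^ (1+β) = 0 := by
      intro u hu
      rw [hfs u (lt_of_le_of_lt (le_max_left _ _) hu),
        hws u (lt_of_le_of_lt (le_max_right _ _) hu),
        Real.zero_rpow h1β.ne', mul_zero, sub_zero]
    have hint : ∀ t, 0 ≤ t → IntegrableOn
        (fun s => (f (t+s) - K * w (t+s) ^ (1+β)) * s ^ (β-1)) (Ioi (0:ℝ)) :=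
      fun t ht => st18_comp_intOn hβ0 hg hgb hgs ht
    have hsupp : ∀ u, R < u → w u = 0 := by
      intro u hu
      have hu0 : (0:ℝ) ≤ u := (hR.trans hu).le
      have hle : w u ≤ 0 := by
        rw [heq u hu0]
        have h3 : (∫ s in Set.Ioi (0:ℝ), (f (u+s) - K * w (u+s)^(1+β)) * s^(β-1)) ≤ 0 := by
          apply setIntegral_nonpos measurableSet_Ioi
          intro s hs
          have hs0 : (0:ℝ) < s := hs
          rw [hfs (u+s) (by linarith), zero_sub]
          apply mul_nonpos_of_nonpos_of_nonneg _ (st18_J_nonneg hs0.le)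
          simp only [neg_nonpos]
          exact mul_nonneg hK.le (Real.rpow_nonneg (hw0 _) _)
        nlinarith [mul_pos hβ0 hc]
      exact le_antisymm hle (hw0 u)
    refine ⟨hint, hsupp, ?_⟩
    intro u hu
    rw [heq u hu]
    have hmono : (∫ s in Set.Ioi (0:ℝ), (f (u+s) - K * w (u+s)^(1+β)) * s^(β-1))
        ≤ ∫ s in Ioi (0:ℝ), (Ioc (0:ℝ) R).indicator (fun s' => Θ * s'^(β-1)) s := by
      apply setIntegral_mono_on (hint u hu) (st18_dom_int hβ0 Θ le_rfl) measurableSet_Ioi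
      intro s hs
      have hs0 : (0:ℝ) < s := hs
      by_cases hsR : s ≤ R
      · rw [indicator_of_mem (show s ∈ Ioc (0:ℝ) R from ⟨hs0, hsR⟩)]
        apply mul_le_mul_of_nonneg_right _ (st18_J_nonneg hs0.le)
        have h4 := Real.rpow_nonneg (hw0 (u+s)) (1+β)
        nlinarith [hfΘ (u+s), hK.le]
      · push_neg at hsR
        rw [indicator_of_notMem (fun hmem : s ∈ Ioc (0:ℝ) R => absurd hmem.2 (not_le.2 hsR)),
          hfs (u+s) (by linarith), zero_sub]
        apply mul_nonpos_of_nonpos_of_nonneg _ (st18_J_nonneg hs0.le)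
        simp only [neg_nonpos]
        exact mul_nonneg hK.le (Real.rpow_nonneg (hw0 _) _)
    rw [st18_dom_int_eq hβ0 Θ le_rfl, st18_J_int hβ0 hR.le] at hmono
    calc β * c * ∫ s in Set.Ioi (0:ℝ), (f (u+s) - K * w (u+s)^(1+β)) * s^(β-1)
        ≤ β * c * (Θ * (R ^ β / β)) :=
          mul_le_mul_of_nonneg_left hmono (by positivity)
      _ = M := rfl
  obtain ⟨hint₁, hsupp₁, hbd₁⟩ := key f₁ v₁ M₁ B₁ hf₁m hv₁m hf₁0 hf₁Θ hf₁s hv₁0 hv₁M hv₁s heq₁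
  obtain ⟨hint₂, hsupp₂, hbd₂⟩ := key f₂ v₂ M₂ B₂ hf₂m hv₂m hf₂0 hf₂Θ hf₂s hv₂0 hv₂M hv₂s heq₂
  refine ⟨hsupp₁, ?_⟩
  have hD0 : 0 ≤ D := le_trans (setIntegral_nonneg measurableSet_Ioi (fun s hs =>
    mul_nonneg (abs_nonneg _) (st18_J_nonneg (le_of_lt hs)))) (hD 0 le_rfl)
  have h1β : (0:ℝ) < 1 + β := by linarith
  -- integrability of the difference integrand
  have hWJ : ∀ t, 0 ≤ t → IntegrableOn
      (fun s => |v₁ (t+s) - v₂ (t+s)| * s^(β-1)) (Ioi (0:ℝ)) := by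
    intro t ht
    apply st18_comp_intOn hβ0 (g := fun u => |v₁ u - v₂ u|) ((hv₁m.sub hv₂m).abs)
      (Mg := M) (Rg := R) _ _ ht
    · intro u hu
      show abs |v₁ u - v₂ u| ≤ M
      rw [abs_abs, abs_le]
      constructor <;> nlinarith [hv₁0 u, hv₂0 u, hbd₁ u hu.le, hbd₂ u hu.le]
    · intro u hu
      show |v₁ u - v₂ u| = 0
      rw [hsupp₁ u hu, hsupp₂ u hu, sub_self, abs_zero]
  -- the basic inequality
  have hstar : ∀ t, 0 ≤ t → |v₁ t - v₂ t| ≤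
      β*c*D + L * ∫ s in Ioi (0:ℝ), |v₁ (t+s) - v₂ (t+s)| * s^(β-1) := by
    intro t ht
    have hDJ : IntegrableOn (fun s => (f₁ (t+s) - f₂ (t+s)) * s^(β-1)) (Ioi (0:ℝ)) := by
      apply st18_comp_intOn hβ0 (g := fun u => f₁ u - f₂ u) (hf₁m.sub hf₂m)
        (Mg := Θ) (Rg := R) _ _ ht
      · intro u hu
        show |f₁ u - f₂ u| ≤ Θ
        rw [abs_le]
        constructor <;> nlinarith [hf₁0 u, hf₂0 u, hf₁Θ u, hf₂Θ u]
      · intro u hu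
        show f₁ u - f₂ u = 0
        rw [hf₁s u hu, hf₂s u hu, sub_self]
    have hEJ : IntegrableOn
        (fun s => (K * v₁ (t+s)^(1+β) - K * v₂ (t+s)^(1+β)) * s^(β-1)) (Ioi (0:ℝ)) := by
      apply st18_comp_intOn hβ0 (g := fun u => K * v₁ u ^(1+β) - K * v₂ u^(1+β))
        (Mg := K * M^(1+β)) (Rg := R) (by fun_prop) _ _ ht
      · intro u hu
        show |K * v₁ u ^ (1+β) - K * v₂ u ^ (1+β)| ≤ K * M^(1+β)
        have h1 : 0 ≤ v₁ u ^ (1+β) := Real.rpow_nonneg (hv₁0 u) _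
        have h2 : 0 ≤ v₂ u ^ (1+β) := Real.rpow_nonneg (hv₂0 u) _
        have h3 : v₁ u ^ (1+β) ≤ M ^ (1+β) := Real.rpow_le_rpow (hv₁0 u) (hbd₁ u hu.le) h1β.le
        have h4 : v₂ u ^ (1+β) ≤ M ^ (1+β) := Real.rpow_le_rpow (hv₂0 u) (hbd₂ u hu.le) h1β.le
        rw [abs_le]
        refine ⟨?_, ?_⟩ <;>
        nlinarith [mul_le_mul_of_nonneg_left h3 hK.le, mul_le_mul_of_nonneg_left h4 hK.le,
          mul_nonneg hK.le h1, mul_nonneg hK.le h2]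
      · intro u hu
        show K * v₁ u ^ (1+β) - K * v₂ u ^ (1+β) = 0
        rw [hsupp₁ u hu, hsupp₂ u hu, Real.zero_rpow h1β.ne', mul_zero, sub_self]
    have hsplit : v₁ t - v₂ t = β*c*((∫ s in Ioi (0:ℝ), (f₁ (t+s) - f₂ (t+s)) * s^(β-1))
        - ∫ s in Ioi (0:ℝ), (K * v₁ (t+s)^(1+β) - K * v₂ (t+s)^(1+β)) * s^(β-1)) := by
      rw [heq₁ t ht, heq₂ t ht, ← mul_sub, ← integral_sub (hint₁ t ht) (hint₂ t ht),
        ← integral_sub hDJ hEJ]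
      congr 1
      apply setIntegral_congr_fun measurableSet_Ioi
      intro s hs
      ring
    rw [hsplit]
    set A : ℝ := ∫ s in Ioi (0:ℝ), (f₁ (t+s) - f₂ (t+s)) * s^(β-1) with hA
    set B : ℝ := ∫ s in Ioi (0:ℝ), (K * v₁ (t+s)^(1+β) - K * v₂ (t+s)^(1+β)) * s^(β-1) with hB
    have h1 : |A| ≤ D := by
      refine le_trans ?_ (hD t ht)
      rw [hA, ← Real.norm_eq_abs]
      refine le_trans (norm_integral_le_integral_norm _) (le_of_eq ?_)
      apply setIntegral_congr_fun measurableSet_Ioi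
      intro s hs
      show ‖(f₁ (t+s) - f₂ (t+s)) * s^(β-1)‖ = |f₁ (t+s) - f₂ (t+s)| * s^(β-1)
      rw [Real.norm_eq_abs, abs_mul, abs_of_nonneg (st18_J_nonneg (le_of_lt hs))]
    have h2 : |B| ≤ (K * ((1+β) * M^β)) *
        ∫ s in Ioi (0:ℝ), |v₁ (t+s) - v₂ (t+s)| * s^(β-1) := by
      rw [hB, ← Real.norm_eq_abs]
      refine le_trans (norm_integral_le_integral_norm _) ?_
      rw [show (K * ((1+β) * M^β)) * ∫ s in Ioi (0:ℝ), |v₁ (t+s) - v₂ (t+s)| * s^(β-1)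
          = ∫ s in Ioi (0:ℝ), (K * ((1+β) * M^β)) * (|v₁ (t+s) - v₂ (t+s)| * s^(β-1))
        from (MeasureTheory.integral_const_mul _ _).symm]
      apply setIntegral_mono_on hEJ.norm ((hWJ t ht).const_mul _) measurableSet_Ioi
      intro s hs
      have hs0 : (0:ℝ) < s := hs
      rw [Real.norm_eq_abs, abs_mul, abs_of_nonneg (st18_J_nonneg hs0.le), ← mul_sub K,
        abs_mul, abs_of_nonneg hK.le]
      have hmvt := st18_mvt (M := M) hβ0 ⟨hv₁0 (t+s), hbd₁ (t+s) (by linarith)⟩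
        ⟨hv₂0 (t+s), hbd₂ (t+s) (by linarith)⟩
      calc K * |v₁ (t+s)^(1+β) - v₂ (t+s)^(1+β)| * s^(β-1)
          ≤ K * (((1+β) * M^β) * |v₁ (t+s) - v₂ (t+s)|) * s^(β-1) :=
            mul_le_mul_of_nonneg_right (mul_le_mul_of_nonneg_left hmvt hK.le)
              (st18_J_nonneg hs0.le)
        _ = (K * ((1+β) * M^β)) * (|v₁ (t+s) - v₂ (t+s)| * s^(β-1)) := by ring
    have habs : |A - B| ≤ |A| + |B| := by
      rw [sub_eq_add_neg]
      exact le_trans (abs_add_le _ _) (by rw [abs_neg])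
    have hInn : 0 ≤ ∫ s in Ioi (0:ℝ), |v₁ (t+s) - v₂ (t+s)| * s^(β-1) :=
      setIntegral_nonneg measurableSet_Ioi (fun s hs =>
        mul_nonneg (abs_nonneg _) (st18_J_nonneg (le_of_lt hs)))
    rw [abs_mul, abs_of_nonneg (by positivity : (0:ℝ) ≤ β*c)]
    calc β*c*|A - B| ≤ β*c*(|A| + |B|) :=
        mul_le_mul_of_nonneg_left habs (by positivity)
      _ ≤ β*c*(D + (K * ((1+β) * M^β)) *
          ∫ s in Ioi (0:ℝ), |v₁ (t+s) - v₂ (t+s)| * s^(β-1)) := by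
        apply mul_le_mul_of_nonneg_left _ (by positivity : (0:ℝ) ≤ β*c)
        linarith
      _ = β*c*D + L * ∫ s in Ioi (0:ℝ), |v₁ (t+s) - v₂ (t+s)| * s^(β-1) := by
        rw [hLdef]; ring
  -- weighted supremum argument
  have hexpJ : IntegrableOn (fun s' : ℝ => Real.exp (-lam*s') * s'^(β-1)) (Ioc (0:ℝ) R) := by
    apply Integrable.mono' (st18_J_intOn hβ0 R)
    · exact ((Real.continuous_exp.comp (continuous_const.mul continuous_id)).measurable.mul
        st18_J_meas).aestronglyMeasurable
    · refine (ae_restrict_iff' measurableSet_Ioc).mpr (ae_of_all _ fun s hs => ?_)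
      rw [Real.norm_eq_abs, abs_mul, abs_of_nonneg (Real.exp_pos _).le,
        abs_of_nonneg (st18_J_nonneg hs.1.le)]
      have h1 : Real.exp (-lam*s) ≤ 1 := by
        rw [← Real.exp_zero]
        exact Real.exp_le_exp.mpr (by nlinarith [hs.1])
      nlinarith [st18_J_nonneg (β := β) hs.1.le, Real.exp_pos (-lam*s)]
  set W : ℝ → ℝ := fun u => Real.exp (lam * u) * |v₁ u - v₂ u| with hWdef
  have hbdd : BddAbove (W '' Ici 0) := by
    refine ⟨Real.exp (lam * R) * M, ?_⟩
    rintro x ⟨u, hu, rfl⟩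
    have hu0 : (0:ℝ) ≤ u := hu
    by_cases huR : u ≤ R
    · apply mul_le_mul ?_ ?_ (abs_nonneg _) (Real.exp_pos _).le
      · exact Real.exp_le_exp.mpr (mul_le_mul_of_nonneg_left huR hlam0)
      · rw [abs_le]
        constructor <;> nlinarith [hv₁0 u, hv₂0 u, hbd₁ u hu0, hbd₂ u hu0]
    · push_neg at huR
      simp only [hWdef]
      rw [hsupp₁ u huR, hsupp₂ u huR, sub_self, abs_zero, mul_zero]
      positivity
  have hne : (W '' Ici 0).Nonempty := ⟨W 0, mem_image_of_mem _ (le_refl (0:ℝ))⟩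
  set S : ℝ := sSup (W '' Ici 0) with hSdef
  have hWleS : ∀ u, 0 ≤ u → Real.exp (lam*u) * |v₁ u - v₂ u| ≤ S :=
    fun u hu => le_csSup hbdd (mem_image_of_mem _ hu)
  have hS0 : 0 ≤ S :=
    le_trans (mul_nonneg (Real.exp_pos _).le (abs_nonneg _)) (hWleS 0 le_rfl)
  have hkey : ∀ u, 0 ≤ u → W u ≤ Real.exp (lam*R) * (β*c*D) + (1/2) * S := by
    intro u hu
    by_cases huR : u ≤ R
    · have hstar' := hstar u hu
      have hIbd : (∫ s in Ioi (0:ℝ), |v₁ (u+s) - v₂ (u+s)| * s^(β-1))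
          ≤ Real.exp (-(lam*u)) * (S * Im) := by
        have hmono : (∫ s in Ioi (0:ℝ), |v₁ (u+s) - v₂ (u+s)| * s^(β-1))
            ≤ ∫ s in Ioi (0:ℝ), (Ioc (0:ℝ) R).indicator
              (fun s' => (Real.exp (-(lam*u)) * S) * (Real.exp (-lam*s') * s'^(β-1))) s := by
          apply setIntegral_mono_on (hWJ u hu)
            ((IntegrableOn.integrable_indicator (hexpJ.const_mul _) measurableSet_Ioc).restrict)
            measurableSet_Ioi
          intro s hs
          have hs0 : (0:ℝ) < s := hs
          by_cases hus : u + s ≤ R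
          · have hsR : s ≤ R := by linarith
            rw [indicator_of_mem (show s ∈ Ioc (0:ℝ) R from ⟨hs0, hsR⟩)]
            have h5 := hWleS (u+s) (by linarith)
            have h6 := mul_le_mul_of_nonneg_left h5 (Real.exp_pos (-(lam*(u+s)))).le
            rw [← mul_assoc, ← Real.exp_add, neg_add_cancel, Real.exp_zero, one_mul] at h6
            calc |v₁ (u+s) - v₂ (u+s)| * s^(β-1)
                ≤ (Real.exp (-(lam*(u+s))) * S) * s^(β-1) :=
                  mul_le_mul_of_nonneg_right h6 (st18_J_nonneg hs0.le)
              _ = (Real.exp (-(lam*u)) * S) * (Real.exp (-lam*s) * s^(β-1)) := by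
                  rw [show -(lam*(u+s)) = -(lam*u) + -lam*s by ring, Real.exp_add]
                  ring
          · push_neg at hus
            rw [hsupp₁ (u+s) hus, hsupp₂ (u+s) hus, sub_self, abs_zero, zero_mul]
            apply indicator_nonneg
            intro s' hs'
            exact mul_nonneg (mul_nonneg (Real.exp_pos _).le hS0)
              (mul_nonneg (Real.exp_pos _).le (st18_J_nonneg hs'.1.le))
        refine le_trans hmono (le_of_eq ?_)
        rw [setIntegral_indicator measurableSet_Ioc,
          show Ioi (0:ℝ) ∩ Ioc (0:ℝ) R = Ioc (0:ℝ) R from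
            inter_eq_right.mpr (fun x hx => hx.1),
          MeasureTheory.integral_const_mul, ← hImdef]
        ring
      have hWu : W u ≤ Real.exp (lam*u) * (β*c*D) + L * (S * Im) := by
        simp only [hWdef]
        calc Real.exp (lam*u) * |v₁ u - v₂ u|
            ≤ Real.exp (lam*u) * (β*c*D + L *
                ∫ s in Ioi (0:ℝ), |v₁ (u+s) - v₂ (u+s)| * s^(β-1)) :=
              mul_le_mul_of_nonneg_left hstar' (Real.exp_pos _).le
          _ ≤ Real.exp (lam*u) * (β*c*D + L * (Real.exp (-(lam*u)) * (S * Im))) := by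
              apply mul_le_mul_of_nonneg_left _ (Real.exp_pos _).le
              have h7 := mul_le_mul_of_nonneg_left hIbd hL0
              linarith
          _ = Real.exp (lam*u) * (β*c*D) +
              (Real.exp (lam*u) * Real.exp (-(lam*u))) * (L * (S * Im)) := by ring
          _ = Real.exp (lam*u) * (β*c*D) + L * (S * Im) := by
              rw [← Real.exp_add, add_neg_cancel, Real.exp_zero, one_mul]
      have h3 : Real.exp (lam*u) * (β*c*D) ≤ Real.exp (lam*R) * (β*c*D) :=
        mul_le_mul_of_nonneg_right
          (Real.exp_le_exp.mpr (mul_le_mul_of_nonneg_left huR hlam0)) (by positivity)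
      have h4 : L * (S * Im) ≤ (1/2) * S := by nlinarith
      linarith
    · push_neg at huR
      simp only [hWdef]
      rw [hsupp₁ u huR, hsupp₂ u huR, sub_self, abs_zero, mul_zero]
      positivity
  have hSle : S ≤ Real.exp (lam*R) * (β*c*D) + (1/2)*S := by
    apply csSup_le hne
    rintro x ⟨u, hu, rfl⟩
    exact hkey u hu
  have hSfin : S ≤ 2 * (Real.exp (lam*R) * (β*c*D)) := by linarith
  intro t ht
  have h5 : |v₁ t - v₂ t| ≤ Real.exp (lam*t) * |v₁ t - v₂ t| := by
    nlinarith [Real.one_le_exp (mul_nonneg hlam0 ht), abs_nonneg (v₁ t - v₂ t)]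
  calc |v₁ t - v₂ t| ≤ S := le_trans h5 (hWleS t ht)
    _ ≤ 2 * Real.exp (lam * R) * (β * c) * D := by linarith [hSfin]; 

/-- continuity of solutions of equation (E) in the data. With
`f_n = θ₁ 1_{[0,r_n]} + θ₂ 1_{[0,r]}`, `f = (θ₁+θ₂) 1_{[0,r]}`, `r_n → r`,
and `v_n`, `v` the (unique) bounded nonnegative compactly supported Borel
solutions of (E) with data `f_n` and `f`, one has
`sup_{t≥0} |v_n(t) - v(t)| → 0`, and in particular
`∫_0^∞ v_n(t) dt → ∫_0^∞ v(t) dt`. -/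
theorem stmt18
    (β K c : ℝ) (hβ : β ∈ Ioo (0 : ℝ) 1) (hK : 0 < K) (hc : 0 < c)
    (θ₁ θ₂ r : ℝ) (hθ₁ : 0 ≤ θ₁) (hθ₂ : 0 ≤ θ₂) (hr : 0 < r)
    (rn : ℕ → ℝ) (hrn_pos : ∀ n, 0 < rn n)
    (hrn_lim : Tendsto rn atTop (nhds r))
    (vn : ℕ → ℝ → ℝ) (v : ℝ → ℝ)
    (hvn_meas : ∀ n, Measurable (vn n))
    (hvn_nonneg : ∀ n t, 0 ≤ vn n t)
    (hvn_bdd : ∀ n, ∃ M, ∀ t, vn n t ≤ M)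
    (hvn_supp : ∀ n, ∃ b : ℝ, ∀ t, b < t → vn n t = 0)
    (hvn_eq : ∀ n, ∀ t ≥ (0 : ℝ), vn n t =
      β * c * ∫ s in Set.Ioi (0 : ℝ),
        ((θ₁ * Set.indicator (Icc (0 : ℝ) (rn n)) (fun _ => (1 : ℝ)) (t + s) +
          θ₂ * Set.indicator (Icc (0 : ℝ) r) (fun _ => (1 : ℝ)) (t + s)) -
          K * vn n (t + s) ^ (1 + β)) * s ^ (β - 1))
    (hv_meas : Measurable v) (hv_nonneg : ∀ t, 0 ≤ v t)
    (hv_bdd : ∃ M, ∀ t, v t ≤ M)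
    (hv_supp : ∃ b : ℝ, ∀ t, b < t → v t = 0)
    (hv_eq : ∀ t ≥ (0 : ℝ), v t =
      β * c * ∫ s in Set.Ioi (0 : ℝ),
        ((θ₁ + θ₂) * Set.indicator (Icc (0 : ℝ) r) (fun _ => (1 : ℝ)) (t + s) -
          K * v (t + s) ^ (1 + β)) * s ^ (β - 1)) :
    (∀ ε > (0 : ℝ), ∃ N : ℕ, ∀ n ≥ N, ∀ t ≥ (0 : ℝ), |vn n t - v t| ≤ ε) ∧
    Tendsto (fun n => ∫ t in Set.Ioi (0 : ℝ), vn n t) atTop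
      (nhds (∫ t in Set.Ioi (0 : ℝ), v t)) := by
  obtain ⟨hβ0, hβ1⟩ := hβ
  obtain ⟨R0, hR0⟩ := hrn_lim.bddAbove_range
  set R : ℝ := max (max R0 r) 1 with hRdef
  have hR1 : (1:ℝ) ≤ R := le_max_right _ _
  have hRpos : (0:ℝ) < R := lt_of_lt_of_le one_pos hR1
  have hRr : r ≤ R := le_trans (le_max_right R0 r) (le_max_left _ _)
  have hRrn : ∀ n, rn n ≤ R := fun n =>
    le_trans (hR0 (Set.mem_range_self n)) (le_trans (le_max_left R0 r) (le_max_left _ _))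
  obtain ⟨C, hCpos, hest⟩ := st18_est β K c (θ₁ + θ₂) R hβ0 hβ1 hK hc (by linarith) hRpos
  -- indicator facts
  have hind0 : ∀ (a u : ℝ), 0 ≤ (Icc (0:ℝ) a).indicator (fun _ => (1:ℝ)) u :=
    fun a u => indicator_nonneg (fun _ _ => zero_le_one) u
  have hind1 : ∀ (a u : ℝ), (Icc (0:ℝ) a).indicator (fun _ => (1:ℝ)) u ≤ 1 := by
    intro a u
    by_cases h : u ∈ Icc (0:ℝ) a
    · rw [indicator_of_mem h]
    · rw [indicator_of_notMem h]; exact zero_le_one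
  have hinds : ∀ (a u : ℝ), a < u → (Icc (0:ℝ) a).indicator (fun _ => (1:ℝ)) u = 0 :=
    fun a u h => indicator_of_notMem (fun hm => absurd hm.2 (not_le.2 h)) _
  -- data for the approximating problems
  have hfnm : ∀ n, Measurable (fun u => θ₁ * (Icc (0:ℝ) (rn n)).indicator (fun _ => (1:ℝ)) u
      + θ₂ * (Icc (0:ℝ) r).indicator (fun _ => (1:ℝ)) u) := by
    intro n
    exact ((measurable_const.indicator measurableSet_Icc).const_mul θ₁).add
      ((measurable_const.indicator measurableSet_Icc).const_mul θ₂)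
  have hfn0 : ∀ n u, 0 ≤ θ₁ * (Icc (0:ℝ) (rn n)).indicator (fun _ => (1:ℝ)) u
      + θ₂ * (Icc (0:ℝ) r).indicator (fun _ => (1:ℝ)) u :=
    fun n u => add_nonneg (mul_nonneg hθ₁ (hind0 _ u)) (mul_nonneg hθ₂ (hind0 _ u))
  have hfnΘ : ∀ n u, θ₁ * (Icc (0:ℝ) (rn n)).indicator (fun _ => (1:ℝ)) u
      + θ₂ * (Icc (0:ℝ) r).indicator (fun _ => (1:ℝ)) u ≤ θ₁ + θ₂ := by
    intro n u
    have h1 := hind1 (rn n) u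
    have h2 := hind1 r u
    have h3 := hind0 (rn n) u
    have h4 := hind0 r u
    nlinarith
  have hfns : ∀ n u, R < u → θ₁ * (Icc (0:ℝ) (rn n)).indicator (fun _ => (1:ℝ)) u
      + θ₂ * (Icc (0:ℝ) r).indicator (fun _ => (1:ℝ)) u = 0 := by
    intro n u hu
    rw [hinds (rn n) u (by linarith [hRrn n]), hinds r u (by linarith), mul_zero, mul_zero,
      add_zero]
  have hFm : Measurable (fun u => (θ₁ + θ₂) * (Icc (0:ℝ) r).indicator (fun _ => (1:ℝ)) u) :=
    (measurable_const.indicator measurableSet_Icc).const_mul (θ₁ + θ₂)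
  have hF0 : ∀ u, 0 ≤ (θ₁ + θ₂) * (Icc (0:ℝ) r).indicator (fun _ => (1:ℝ)) u :=
    fun u => mul_nonneg (by linarith) (hind0 _ u)
  have hFΘ : ∀ u, (θ₁ + θ₂) * (Icc (0:ℝ) r).indicator (fun _ => (1:ℝ)) u ≤ θ₁ + θ₂ := by
    intro u
    have h1 := hind1 r u
    have h2 := hind0 r u
    nlinarith
  have hFs : ∀ u, R < u → (θ₁ + θ₂) * (Icc (0:ℝ) r).indicator (fun _ => (1:ℝ)) u = 0 := by
    intro u hu
    rw [hinds r u (by linarith), mul_zero]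
  -- the data-difference estimate
  have hDn : ∀ n, ∀ t, 0 ≤ t → (∫ s in Ioi (0:ℝ),
      |(θ₁ * (Icc (0:ℝ) (rn n)).indicator (fun _ => (1:ℝ)) (t+s)
        + θ₂ * (Icc (0:ℝ) r).indicator (fun _ => (1:ℝ)) (t+s))
        - (θ₁ + θ₂) * (Icc (0:ℝ) r).indicator (fun _ => (1:ℝ)) (t+s)| * s^(β-1))
      ≤ θ₁ * (|rn n - r| ^ β / β) := by
    intro n t ht
    set p : ℝ := max (min (rn n) r - t) 0 with hpdef
    set δ : ℝ := |rn n - r| with hδdef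
    have hp0 : (0:ℝ) ≤ p := le_max_right _ _
    have hδ0 : (0:ℝ) ≤ δ := abs_nonneg _
    have hmono : (∫ s in Ioi (0:ℝ),
        |(θ₁ * (Icc (0:ℝ) (rn n)).indicator (fun _ => (1:ℝ)) (t+s)
          + θ₂ * (Icc (0:ℝ) r).indicator (fun _ => (1:ℝ)) (t+s))
          - (θ₁ + θ₂) * (Icc (0:ℝ) r).indicator (fun _ => (1:ℝ)) (t+s)| * s^(β-1))
        ≤ ∫ s in Ioi (0:ℝ), (Ioc p (p+δ)).indicator (fun s' => θ₁ * s'^(β-1)) s := by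
      have hLint : IntegrableOn (fun s =>
          |(θ₁ * (Icc (0:ℝ) (rn n)).indicator (fun _ => (1:ℝ)) (t+s)
            + θ₂ * (Icc (0:ℝ) r).indicator (fun _ => (1:ℝ)) (t+s))
            - (θ₁ + θ₂) * (Icc (0:ℝ) r).indicator (fun _ => (1:ℝ)) (t+s)| * s^(β-1))
          (Ioi (0:ℝ)) := by
        apply st18_comp_intOn hβ0 (g := fun u =>
            |(θ₁ * (Icc (0:ℝ) (rn n)).indicator (fun _ => (1:ℝ)) u
              + θ₂ * (Icc (0:ℝ) r).indicator (fun _ => (1:ℝ)) u)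
              - (θ₁ + θ₂) * (Icc (0:ℝ) r).indicator (fun _ => (1:ℝ)) u|)
          ((hfnm n).sub hFm).abs (Mg := 2*(θ₁+θ₂)) (Rg := R) _ _ ht
        · intro u hu
          show abs |_ - _| ≤ 2*(θ₁+θ₂)
          rw [abs_abs, abs_le]
          constructor <;> nlinarith [hfn0 n u, hfnΘ n u, hF0 u, hFΘ u]
        · intro u hu
          show |_ - _| = (0:ℝ)
          rw [hfns n u hu, hFs u hu, sub_self, abs_zero]
      apply setIntegral_mono_on hLint (st18_dom_int hβ0 θ₁ hp0) measurableSet_Ioi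
      intro s hs
      have hs0 : (0:ℝ) < s := hs
      have hu0 : (0:ℝ) ≤ t + s := by linarith
      have hdiff : (θ₁ * (Icc (0:ℝ) (rn n)).indicator (fun _ => (1:ℝ)) (t+s)
          + θ₂ * (Icc (0:ℝ) r).indicator (fun _ => (1:ℝ)) (t+s))
          - (θ₁ + θ₂) * (Icc (0:ℝ) r).indicator (fun _ => (1:ℝ)) (t+s)
          = θ₁ * ((Icc (0:ℝ) (rn n)).indicator (fun _ => (1:ℝ)) (t+s)
            - (Icc (0:ℝ) r).indicator (fun _ => (1:ℝ)) (t+s)) := by ring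
      rw [hdiff]
      by_cases h1 : t + s ∈ Icc (0:ℝ) (rn n) <;> by_cases h2 : t + s ∈ Icc (0:ℝ) r
      · rw [indicator_of_mem h1, indicator_of_mem h2, sub_self, mul_zero, abs_zero, zero_mul]
        exact indicator_nonneg (fun s' hs' => mul_nonneg hθ₁ (st18_J_nonneg (hp0.trans_lt hs'.1).le)) s
      · -- t+s ≤ rn n, r < t+s
        have hr2 : r < t + s := by
          by_contra hcon
          exact h2 ⟨hu0, not_lt.1 hcon⟩
        have hrn2 : t + s ≤ rn n := h1.2
        have hmin : min (rn n) r = r := min_eq_right (by linarith)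
        have hδval : rn n - r = δ ⊔ δ := by
          rw [hδdef, abs_of_nonneg (by linarith), sup_idem]
        have hmem : s ∈ Ioc p (p+δ) := by
          constructor
          · apply max_lt <;> [skip; exact hs0]
            rw [hmin]; linarith
          · have h3 : min (rn n) r - t ≤ p := le_max_left _ _
            have h4 : δ = rn n - r := by rw [hδdef, abs_of_nonneg (by linarith)]
            rw [hmin] at h3
            linarith
        rw [indicator_of_mem hmem, indicator_of_mem h1, indicator_of_notMem h2]
        rw [sub_zero, mul_one, abs_of_nonneg hθ₁]
      · -- t+s ≤ r, rn n < t+s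
        have hrn2 : rn n < t + s := by
          by_contra hcon
          exact h1 ⟨hu0, not_lt.1 hcon⟩
        have hr2 : t + s ≤ r := h2.2
        have hmin : min (rn n) r = rn n := min_eq_left (by linarith)
        have hmem : s ∈ Ioc p (p+δ) := by
          constructor
          · apply max_lt <;> [skip; exact hs0]
            rw [hmin]; linarith
          · have h3 : min (rn n) r - t ≤ p := le_max_left _ _
            have h4 : δ = r - rn n := by
              rw [hδdef, abs_of_nonpos (by linarith), neg_sub]
            rw [hmin] at h3
            linarith
        rw [indicator_of_mem hmem, indicator_of_mem h2, indicator_of_notMem h1]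
        rw [zero_sub, mul_neg, mul_one, abs_neg, abs_of_nonneg hθ₁]
      · rw [indicator_of_notMem h1, indicator_of_notMem h2, sub_self, mul_zero, abs_zero,
          zero_mul]
        exact indicator_nonneg (fun s' hs' => mul_nonneg hθ₁ (st18_J_nonneg (hp0.trans_lt hs'.1).le)) s
    refine le_trans hmono ?_
    rw [st18_dom_int_eq hβ0 θ₁ hp0]
    exact mul_le_mul_of_nonneg_left (st18_J_int_shift hβ0 hβ1 hp0 hδ0) hθ₁
  -- apply the estimate
  obtain ⟨Mv, hMv⟩ := hv_bdd
  obtain ⟨bv, hbv⟩ := hv_supp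
  have hveq' : ∀ t, 0 ≤ t → v t = β * c * ∫ s in Set.Ioi (0:ℝ),
      ((fun u => (θ₁ + θ₂) * (Icc (0:ℝ) r).indicator (fun _ => (1:ℝ)) u) (t+s)
        - K * v (t+s) ^ (1+β)) * s ^ (β-1) := fun t ht => hv_eq t ht
  have hD0' : ∀ t, 0 ≤ t → (∫ s in Set.Ioi (0:ℝ),
      |(fun u => (θ₁ + θ₂) * (Icc (0:ℝ) r).indicator (fun _ => (1:ℝ)) u) (t+s)
        - (fun u => (θ₁ + θ₂) * (Icc (0:ℝ) r).indicator (fun _ => (1:ℝ)) u) (t+s)|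
        * s ^ (β-1)) ≤ (0:ℝ) := by
    intro t ht
    simp
  have hvfacts := hest _ _ v v Mv Mv bv bv 0 hFm hFm hv_meas hv_meas hF0 hF0 hFΘ hFΘ hFs hFs
    hv_nonneg hv_nonneg hMv hMv hbv hbv hveq' hveq' hD0'
  have hsuppv : ∀ u, R < u → v u = 0 := hvfacts.1
  have hmain : ∀ n, (∀ u, R < u → vn n u = 0) ∧
      ∀ t, 0 ≤ t → |vn n t - v t| ≤ C * (θ₁ * (|rn n - r| ^ β / β)) := by
    intro n
    obtain ⟨Mn, hMn⟩ := hvn_bdd n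
    obtain ⟨bn, hbn⟩ := hvn_supp n
    exact hest _ _ (vn n) v Mn Mv bn bv _ (hfnm n) hFm (hvn_meas n) hv_meas (hfn0 n) hF0
      (hfnΘ n) hFΘ (hfns n) hFs (hvn_nonneg n) hv_nonneg hMn hMv hbn hbv
      (fun t ht => hvn_eq n t ht) hveq' (hDn n)
  -- convergence of the error bound
  have hDlim : Tendsto (fun n => C * (θ₁ * (|rn n - r| ^ β / β))) atTop (nhds 0) := by
    have h1 : Tendsto (fun n => rn n - r) atTop (nhds 0) := by
      simpa using hrn_lim.sub_const r
    have h2 : Tendsto (fun n => |rn n - r|) atTop (nhds 0) := by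
      simpa using h1.abs
    have h3 := h2.rpow_const (p := β) (Or.inr hβ0.le)
    rw [Real.zero_rpow hβ0.ne'] at h3
    have h4 : Tendsto (fun n => C * (θ₁ * (|rn n - r| ^ β / β))) atTop
        (nhds (C * (θ₁ * (0 / β)))) := ((h3.div_const β).const_mul θ₁).const_mul C
    simpa using h4
  have hpart1 : ∀ ε > (0:ℝ), ∃ N : ℕ, ∀ n ≥ N, ∀ t ≥ (0:ℝ), |vn n t - v t| ≤ ε := by
    intro ε hε
    have hev := hDlim.eventually_lt_const hε
    rw [eventually_atTop] at hev
    obtain ⟨N, hN⟩ := hev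
    exact ⟨N, fun n hn t ht => le_trans ((hmain n).2 t ht) (hN n hn).le⟩
  refine ⟨hpart1, ?_⟩
  -- part 2
  have hIntOn : ∀ (g : ℝ → ℝ) (Mg : ℝ), Measurable g → (∀ u, 0 ≤ g u) → (∀ u, g u ≤ Mg) →
      IntegrableOn g (Ioc (0:ℝ) R) := by
    intro g Mg hm h0 hb
    have hcst : IntegrableOn (fun _ : ℝ => Mg) (Ioc (0:ℝ) R) volume :=
      (integrableOn_const_iff).mpr (Or.inr measure_Ioc_lt_top)
    apply Integrable.mono' hcst hm.aestronglyMeasurable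
    exact ae_of_all _ fun u => by
      rw [Real.norm_eq_abs, abs_of_nonneg (h0 u)]; exact hb u
  have hsplit : ∀ (g : ℝ → ℝ), (∀ u, R < u → g u = 0) → IntegrableOn g (Ioc (0:ℝ) R) →
      ∫ t in Ioi (0:ℝ), g t = ∫ t in Ioc (0:ℝ) R, g t := by
    intro g hsupp hint
    have hunion : Ioc (0:ℝ) R ∪ Ioi R = Ioi 0 := Ioc_union_Ioi_eq_Ioi hRpos.le
    have hzint : IntegrableOn g (Ioi R) := by
      exact (integrableOn_congr_fun (g := fun _ => (0:ℝ)) (fun u hu => hsupp u hu)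
        measurableSet_Ioi).mpr integrableOn_zero
    rw [← hunion, setIntegral_union (Ioc_disjoint_Ioi le_rfl) measurableSet_Ioi hint hzint]
    have hzero : ∫ t in Ioi R, g t = 0 := by
      rw [setIntegral_congr_fun (g := fun _ => (0:ℝ)) measurableSet_Ioi
        (fun u hu => hsupp u hu)]
      simp
    rw [hzero, add_zero]
  have hIv : IntegrableOn v (Ioc (0:ℝ) R) := hIntOn v Mv hv_meas hv_nonneg hMv
  rw [Metric.tendsto_atTop]
  intro ε hε
  obtain ⟨N, hN⟩ := hpart1 (ε / (2*R)) (by positivity)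
  refine ⟨N, fun n hn => ?_⟩
  obtain ⟨Mn, hMn⟩ := hvn_bdd n
  have hIvn : IntegrableOn (vn n) (Ioc (0:ℝ) R) :=
    hIntOn (vn n) Mn (hvn_meas n) (hvn_nonneg n) hMn
  rw [Real.dist_eq, hsplit (vn n) (hmain n).1 hIvn, hsplit v hsuppv hIv,
    ← integral_sub hIvn hIv]
  have hb1 : |∫ t in Ioc (0:ℝ) R, (vn n t - v t)| ≤ ∫ t in Ioc (0:ℝ) R, (ε / (2*R)) := by
    rw [← Real.norm_eq_abs]
    refine le_trans (norm_integral_le_integral_norm _) ?_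
    apply setIntegral_mono_on (hIvn.sub hIv).norm
      ((integrableOn_const_iff).mpr (Or.inr measure_Ioc_lt_top)) measurableSet_Ioc
    intro u hu
    rw [Real.norm_eq_abs]
    exact hN n hn u hu.1.le
  have hb2 : ∫ t in Ioc (0:ℝ) R, (ε / (2*R)) = R * (ε / (2*R)) := by
    rw [setIntegral_const, Real.volume_real_Ioc, smul_eq_mul, sub_zero,
      max_eq_left hRpos.le]
  have : R * (ε / (2*R)) = ε / 2 := by
    field_simp
  rw [hb2, this] at hb1
  linarith
end

section
/- Let f : [0,∞) → [0,∞) be a bounded Borel function vanishing outside a compact set. Then ∑_{k=1}^∞ ∫_0^T φ^{*k}(s) ds < ∞ for every T ≥ 0, the function h(t) := f(t) + ∑_{k=1}^∞ ∫_0^∞ f(t+s) φ^{*k}(s) ds is finite and bounded, and h satisfies the renewal equation h(t) = f(t) + ∫_0^∞ h(t+s) φ(s) ds for all t ≥ 0. -/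
set_option autoImplicit false
set_option maxHeartbeats 1000000

open MeasureTheory Filter Set
open scoped ENNReal

/-- `convIter φ k` is the `(k+1)`-fold convolution `φ^{*(k+1)}` of `φ`. -/
noncomputable def convIter (φ : ℝ → ℝ) : ℕ → ℝ → ℝ
  | 0 => φ
  | n + 1 => fun x => ∫ s, convIter φ n s * φ (x - s)

namespace Stmt19

noncomputable def G (φ : ℝ → ℝ) : ℕ → ℝ → ℝ≥0∞
  | 0 => fun x => ENNReal.ofReal (φ x)
  | n + 1 => fun x => ∫⁻ s, G φ n s * ENNReal.ofReal (φ (x - s))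

lemma G_zero_def (φ : ℝ → ℝ) (x : ℝ) : G φ 0 x = ENNReal.ofReal (φ x) := rfl

lemma G_succ (φ : ℝ → ℝ) (n : ℕ) (x : ℝ) :
    G φ (n + 1) x = ∫⁻ s, G φ n s * ENNReal.ofReal (φ (x - s)) := rfl

/-! ### generic helpers -/

lemma lint_shift (g : ℝ → ℝ≥0∞) (r : ℝ) : ∫⁻ x, g (x - r) = ∫⁻ x, g x := by
  simpa [sub_eq_add_neg] using lintegral_add_right_eq_self (μ := volume) g (-r)

lemma lint_shift_Ioi (g : ℝ → ℝ≥0∞) (a r : ℝ) :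
    ∫⁻ x in Ioi a, g (x - r) = ∫⁻ x in Ioi (a - r), g x := by
  rw [← lintegral_indicator measurableSet_Ioi, ← lintegral_indicator measurableSet_Ioi]
  have h : ∀ x : ℝ, (Ioi a).indicator (fun x => g (x - r)) x
      = (Ioi (a - r)).indicator g (x - r) := by
    intro x
    by_cases hx : x ∈ Ioi a
    · rw [indicator_of_mem hx, indicator_of_mem (by simpa [mem_Ioi, sub_lt_sub_iff_right] using hx)]
    · rw [indicator_of_notMem hx, indicator_of_notMem
        (by simpa [mem_Ioi, sub_lt_sub_iff_right] using hx)]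
  simp_rw [h]
  exact lint_shift _ r

lemma lint_shift_Iic (g : ℝ → ℝ≥0∞) (a r : ℝ) :
    ∫⁻ x in Iic a, g (x - r) = ∫⁻ x in Iic (a - r), g x := by
  rw [← lintegral_indicator measurableSet_Iic, ← lintegral_indicator measurableSet_Iic]
  have h : ∀ x : ℝ, (Iic a).indicator (fun x => g (x - r)) x
      = (Iic (a - r)).indicator g (x - r) := by
    intro x
    by_cases hx : x ∈ Iic a
    · rw [indicator_of_mem hx, indicator_of_mem (by simpa [mem_Iic, sub_le_sub_iff_right] using hx)]
    · rw [indicator_of_notMem hx, indicator_of_notMem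
        (by simpa [mem_Iic, sub_le_sub_iff_right] using hx)]
  simp_rw [h]
  exact lint_shift _ r

lemma lint_Iic_zero {F : ℝ → ℝ≥0∞} (hF : ∀ x < 0, F x = 0) : ∫⁻ x in Iic (0:ℝ), F x = 0 := by
  have hIic : (Iic (0:ℝ)) = Iio 0 ∪ {0} := by
    ext x; simp [le_iff_lt_or_eq]
  have h1 : ∫⁻ x in Iio (0:ℝ), F x = 0 := by
    rw [setLIntegral_congr_fun_ae measurableSet_Iio
      (ae_of_all _ (fun x hx => hF x hx) : ∀ᵐ x ∂volume, x ∈ Iio (0:ℝ) → F x = (fun _ => 0) x)]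
    simp
  have h2 : ∫⁻ x in ({0} : Set ℝ), F x = 0 := by
    have : volume ({0} : Set ℝ) = 0 := Real.volume_singleton
    rw [Measure.restrict_eq_zero.mpr this]
    simp
  refine le_antisymm ?_ zero_le
  calc ∫⁻ x in Iic (0:ℝ), F x = ∫⁻ x in Iio 0 ∪ {0}, F x := by rw [hIic]
    _ ≤ (∫⁻ x in Iio (0:ℝ), F x) + ∫⁻ x in ({0}:Set ℝ), F x := lintegral_union_le _ _ _
    _ = 0 := by rw [h1, h2, add_zero]

lemma lint_eq_Ioi {F : ℝ → ℝ≥0∞} (hF : ∀ x < 0, F x = 0) :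
    ∫⁻ x, F x = ∫⁻ x in Ioi (0:ℝ), F x := by
  rw [← lintegral_add_compl F measurableSet_Ioi (μ := volume), compl_Ioi,
    lint_Iic_zero hF, add_zero]


/-! ### basic properties of `G` -/

section Main

variable {φ : ℝ → ℝ}

lemma Gmeas (hm : Measurable φ) (k : ℕ) : Measurable (G φ k) := by
  induction k with
  | zero => exact ENNReal.measurable_ofReal.comp hm
  | succ n ih =>
      have hmeas : Measurable (fun p : ℝ × ℝ => G φ n p.2 * ENNReal.ofReal (φ (p.1 - p.2))) :=
        (ih.comp measurable_snd).mul
          (ENNReal.measurable_ofReal.comp (hm.comp (measurable_fst.sub measurable_snd)))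
      exact hmeas.lintegral_prod_right'

lemma Gzero (hz : ∀ t < 0, φ t = 0) : ∀ (k : ℕ) (x : ℝ), x < 0 → G φ k x = 0 := by
  intro k
  induction k with
  | zero => intro x hx; simp [G_zero_def, hz x hx]
  | succ n ih =>
      intro x hx
      rw [G_succ]
      have : ∀ s : ℝ, G φ n s * ENNReal.ofReal (φ (x - s)) = 0 := by
        intro s
        rcases lt_or_ge s 0 with hs | hs
        · rw [ih s hs, zero_mul]
        · have : x - s < 0 := by linarith
          rw [hz _ this, ENNReal.ofReal_zero, mul_zero]
      simp [this]

lemma total (hm : Measurable φ) (h0 : ∀ t, 0 ≤ φ t) (hz : ∀ t < 0, φ t = 0)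
    (hint : ∫ t in Set.Ioi (0 : ℝ), φ t = 1) :
    ∫⁻ x, ENNReal.ofReal (φ x) = 1 := by
  have h1 : ∫ t in Set.Ioi (0 : ℝ), φ t
      = (∫⁻ t in Ioi (0:ℝ), ENNReal.ofReal (φ t)).toReal := by
    exact integral_eq_lintegral_of_nonneg_ae (ae_of_all _ h0)
      (hm.aestronglyMeasurable)
  rw [hint] at h1
  have h2 : ∫⁻ t in Ioi (0:ℝ), ENNReal.ofReal (φ t) = 1 :=
    (ENNReal.toReal_eq_one_iff _).mp h1.symm
  rw [lint_eq_Ioi (fun x hx => by simp [hz x hx]), h2]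

lemma Gint (hm : Measurable φ) (htot : ∫⁻ x, ENNReal.ofReal (φ x) = 1) (k : ℕ) :
    ∫⁻ x, G φ k x = 1 := by
  induction k with
  | zero => exact htot
  | succ n ih =>
      have hswap : ∫⁻ x, ∫⁻ s, G φ n s * ENNReal.ofReal (φ (x - s))
          = ∫⁻ s, ∫⁻ x, G φ n s * ENNReal.ofReal (φ (x - s)) := by
        apply lintegral_lintegral_swap
        exact ((Gmeas hm n).comp measurable_snd).mul
          ((ENNReal.measurable_ofReal.comp (hm.comp (measurable_fst.sub measurable_snd)))) |>.aemeasurable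
      calc ∫⁻ x, G φ (n+1) x = ∫⁻ x, ∫⁻ s, G φ n s * ENNReal.ofReal (φ (x - s)) := rfl
        _ = ∫⁻ s, ∫⁻ x, G φ n s * ENNReal.ofReal (φ (x - s)) := hswap
        _ = ∫⁻ s, G φ n s * ∫⁻ x, ENNReal.ofReal (φ (x - s)) := by
            congr 1; funext s
            exact lintegral_const_mul _ (ENNReal.measurable_ofReal.comp
              (hm.comp (measurable_id.sub measurable_const)))
        _ = ∫⁻ s, G φ n s * 1 := by
            congr 1; funext s
            rw [lint_shift (fun x => ENNReal.ofReal (φ x)) s, htot]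
        _ = 1 := by simpa using ih

lemma aefin (hm : Measurable φ) (htot : ∫⁻ x, ENNReal.ofReal (φ x) = 1) (k : ℕ) :
    ∀ᵐ x : ℝ, G φ k x < ∞ :=
  ae_lt_top (Gmeas hm k) (by rw [Gint hm htot k]; exact ENNReal.one_ne_top)

lemma conv_eq (hm : Measurable φ) (h0 : ∀ t, 0 ≤ φ t)
    (htot : ∫⁻ x, ENNReal.ofReal (φ x) = 1) :
    ∀ (k : ℕ) (x : ℝ), convIter φ k x = (G φ k x).toReal := by
  intro k
  induction k with
  | zero => intro x; show φ x = (ENNReal.ofReal (φ x)).toReal; rw [ENNReal.toReal_ofReal (h0 x)]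
  | succ n ih =>
      intro x
      have hfun : (fun s => convIter φ n s * φ (x - s))
          = fun s => (G φ n s).toReal * φ (x - s) := funext fun s => by rw [ih]
      have hmeas : Measurable fun s => (G φ n s).toReal * φ (x - s) :=
        ((Gmeas hm n).ennreal_toReal).mul (hm.comp (measurable_const.sub measurable_id))
      have step1 : convIter φ (n+1) x
          = (∫⁻ s, ENNReal.ofReal ((G φ n s).toReal * φ (x - s))).toReal := by
        show (∫ s, convIter φ n s * φ (x - s)) = _
        rw [hfun]
        exact integral_eq_lintegral_of_nonneg_ae
          (ae_of_all _ fun s => mul_nonneg ENNReal.toReal_nonneg (h0 _))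
          hmeas.aestronglyMeasurable
      have step2 : ∫⁻ s, ENNReal.ofReal ((G φ n s).toReal * φ (x - s))
          = ∫⁻ s, G φ n s * ENNReal.ofReal (φ (x - s)) := by
        apply lintegral_congr_ae
        filter_upwards [aefin hm htot n] with s hs
        rw [ENNReal.ofReal_mul ENNReal.toReal_nonneg, ENNReal.ofReal_toReal hs.ne]
      rw [step1, step2]; rfl

end Main


/-! ### the key renewal bounds -/

noncomputable def Phib (φ : ℝ → ℝ) (c : ℝ) : ℝ≥0∞ := ∫⁻ x in Ioi c, ENNReal.ofReal (φ x)

noncomputable def Phile (φ : ℝ → ℝ) (c : ℝ) : ℝ≥0∞ := ∫⁻ x in Iic c, ENNReal.ofReal (φ x)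

noncomputable def Lap (φ : ℝ → ℝ) : ℝ≥0∞ :=
  ∫⁻ x, ENNReal.ofReal (Real.exp (-x)) * ENNReal.ofReal (φ x)

noncomputable def V (φ : ℝ → ℝ) (k : ℕ) (a : ℝ) : ℝ≥0∞ :=
  ∫⁻ x in Ioi a, ENNReal.ofReal (Real.exp (a - x)) * G φ k x

noncomputable def A (φ : ℝ → ℝ) (k : ℕ) (a : ℝ) : ℝ≥0∞ := ∫⁻ r in Iic a, G φ k r

noncomputable def B (φ : ℝ → ℝ) (k : ℕ) (a : ℝ) : ℝ≥0∞ :=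
  ∫⁻ r in Iic a, G φ k r * Phib φ (a - r)

noncomputable def Cc (φ : ℝ → ℝ) : ℝ≥0∞ := ENNReal.ofReal (2 / (1 - (Lap φ).toReal))

section Bounds

variable {φ : ℝ → ℝ}

lemma Phib_antitone : Antitone (Phib φ) := fun c c' h =>
  lintegral_mono_set (Ioi_subset_Ioi h)

lemma Phib_meas : Measurable (Phib φ) := Phib_antitone.measurable

lemma Phi_add (c : ℝ) : Phile φ c + Phib φ c = ∫⁻ x, ENNReal.ofReal (φ x) := by
  rw [Phile, Phib, ← compl_Iic (a := c)]
  exact lintegral_add_compl _ measurableSet_Iic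

lemma Phile_neg (hz : ∀ t < 0, φ t = 0) {c : ℝ} (hc : c < 0) : Phile φ c = 0 := by
  rw [Phile, setLIntegral_congr_fun_ae measurableSet_Iic
    (ae_of_all _ (fun x hx => by
      rw [hz x (lt_of_le_of_lt hx hc), ENNReal.ofReal_zero]) :
      ∀ᵐ x ∂volume, x ∈ Iic c → ENNReal.ofReal (φ x) = (fun _ => (0:ℝ≥0∞)) x)]
  simp

lemma V_le_one (hm : Measurable φ) (htot : ∫⁻ x, ENNReal.ofReal (φ x) = 1)
    (k : ℕ) (a : ℝ) : V φ k a ≤ 1 := by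
  have h1 : V φ k a ≤ ∫⁻ x in Ioi a, G φ k x := by
    apply setLIntegral_mono' measurableSet_Ioi
    intro x hx
    have : Real.exp (a - x) ≤ 1 := Real.exp_le_one_iff.mpr (by simp at hx; linarith)
    calc ENNReal.ofReal (Real.exp (a - x)) * G φ k x
        ≤ 1 * G φ k x := by
          exact mul_le_mul_left (by simpa using ENNReal.ofReal_le_one.mpr this) _
      _ = G φ k x := one_mul _
  calc V φ k a ≤ ∫⁻ x in Ioi a, G φ k x := h1
    _ ≤ ∫⁻ x, G φ k x := setLIntegral_le_lintegral _ _
    _ = 1 := Gint hm htot k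

lemma A_le_one (hm : Measurable φ) (htot : ∫⁻ x, ENNReal.ofReal (φ x) = 1)
    (k : ℕ) (a : ℝ) : A φ k a ≤ 1 := by
  calc A φ k a ≤ ∫⁻ x, G φ k x := setLIntegral_le_lintegral _ _
    _ = 1 := Gint hm htot k

end Bounds


section Rec

variable {φ : ℝ → ℝ}

lemma K_le_exp (a r : ℝ) :
    (∫⁻ x in Ioi a, ENNReal.ofReal (Real.exp (a - x)) * ENNReal.ofReal (φ (x - r)))
      ≤ ENNReal.ofReal (Real.exp (a - r)) * Lap φ := by
  have hpt : ∀ x : ℝ, ENNReal.ofReal (Real.exp (a - x)) * ENNReal.ofReal (φ (x - r))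
      = ENNReal.ofReal (Real.exp (a - r))
        * (ENNReal.ofReal (Real.exp (-(x - r))) * ENNReal.ofReal (φ (x - r))) := by
    intro x
    have hexp : Real.exp (a - x) = Real.exp (a - r) * Real.exp (-(x - r)) := by
      rw [← Real.exp_add]; congr 1; ring
    rw [hexp, ENNReal.ofReal_mul (Real.exp_nonneg _), mul_assoc]
  calc (∫⁻ x in Ioi a, ENNReal.ofReal (Real.exp (a - x)) * ENNReal.ofReal (φ (x - r)))
      ≤ ∫⁻ x, ENNReal.ofReal (Real.exp (a - x)) * ENNReal.ofReal (φ (x - r)) :=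
        setLIntegral_le_lintegral _ _
    _ = ∫⁻ x, ENNReal.ofReal (Real.exp (a - r))
        * (ENNReal.ofReal (Real.exp (-(x - r))) * ENNReal.ofReal (φ (x - r))) := by
        simp_rw [hpt]
    _ = ENNReal.ofReal (Real.exp (a - r))
        * ∫⁻ x, ENNReal.ofReal (Real.exp (-(x - r))) * ENNReal.ofReal (φ (x - r)) :=
        lintegral_const_mul' _ _ ENNReal.ofReal_ne_top
    _ = ENNReal.ofReal (Real.exp (a - r)) * Lap φ := by
        unfold Lap
        congr 1
        exact lint_shift (fun y => ENNReal.ofReal (Real.exp (-y)) * ENNReal.ofReal (φ y)) r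

lemma K_le_Phib (a r : ℝ) :
    (∫⁻ x in Ioi a, ENNReal.ofReal (Real.exp (a - x)) * ENNReal.ofReal (φ (x - r)))
      ≤ Phib φ (a - r) := by
  have h1 : (∫⁻ x in Ioi a, ENNReal.ofReal (Real.exp (a - x)) * ENNReal.ofReal (φ (x - r)))
      ≤ ∫⁻ x in Ioi a, ENNReal.ofReal (φ (x - r)) := by
    apply setLIntegral_mono' measurableSet_Ioi
    intro x hx
    have : Real.exp (a - x) ≤ 1 := Real.exp_le_one_iff.mpr (by simp at hx; linarith)
    calc ENNReal.ofReal (Real.exp (a - x)) * ENNReal.ofReal (φ (x - r))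
        ≤ 1 * ENNReal.ofReal (φ (x - r)) :=
          mul_le_mul_left (ENNReal.ofReal_le_one.mpr this) _
      _ = _ := one_mul _
  calc _ ≤ ∫⁻ x in Ioi a, ENNReal.ofReal (φ (x - r)) := h1
    _ = Phib φ (a - r) := lint_shift_Ioi (fun y => ENNReal.ofReal (φ y)) a r

lemma Vrec (hm : Measurable φ) (k : ℕ) (a : ℝ) :
    V φ (k + 1) a ≤ Lap φ * V φ k a + B φ k a := by
  have hGm := Gmeas hm k
  have step1 : V φ (k+1) a = ∫⁻ x in Ioi a, ∫⁻ s,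
      ENNReal.ofReal (Real.exp (a - x)) * (G φ k s * ENNReal.ofReal (φ (x - s))) := by
    rw [V]
    congr 1; funext x
    rw [G_succ, lintegral_const_mul' _ _ ENNReal.ofReal_ne_top]
  have hum : Measurable (fun p : ℝ × ℝ =>
      ENNReal.ofReal (Real.exp (a - p.1)) * (G φ k p.2 * ENNReal.ofReal (φ (p.1 - p.2)))) := by
    refine Measurable.mul ?_ (Measurable.mul ?_ ?_)
    · exact ENNReal.measurable_ofReal.comp
        ((Real.measurable_exp).comp (measurable_const.sub measurable_fst))
    · exact hGm.comp measurable_snd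
    · exact ENNReal.measurable_ofReal.comp (hm.comp (measurable_fst.sub measurable_snd))
  have step2 : V φ (k+1) a = ∫⁻ s, ∫⁻ x in Ioi a,
      ENNReal.ofReal (Real.exp (a - x)) * (G φ k s * ENNReal.ofReal (φ (x - s))) := by
    rw [step1]
    exact lintegral_lintegral_swap hum.aemeasurable
  have step3 : V φ (k+1) a = ∫⁻ s, G φ k s *
      ∫⁻ x in Ioi a, ENNReal.ofReal (Real.exp (a - x)) * ENNReal.ofReal (φ (x - s)) := by
    rw [step2]
    apply lintegral_congr
    intro s
    have hmx : Measurable (fun x : ℝ =>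
        ENNReal.ofReal (Real.exp (a - x)) * ENNReal.ofReal (φ (x - s))) :=
      (ENNReal.measurable_ofReal.comp
        ((Real.measurable_exp).comp (measurable_const.sub measurable_id))).mul
        (ENNReal.measurable_ofReal.comp (hm.comp (measurable_id.sub measurable_const)))
    have h := lintegral_const_mul (μ := volume.restrict (Ioi a)) (G φ k s) hmx
    calc ∫⁻ x in Ioi a, ENNReal.ofReal (Real.exp (a - x)) * (G φ k s * ENNReal.ofReal (φ (x - s)))
        = ∫⁻ x in Ioi a, G φ k s * (ENNReal.ofReal (Real.exp (a - x)) * ENNReal.ofReal (φ (x - s))) :=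
          lintegral_congr fun x => by ring
      _ = G φ k s * ∫⁻ x in Ioi a, ENNReal.ofReal (Real.exp (a - x)) * ENNReal.ofReal (φ (x - s)) := h
  set K : ℝ → ℝ≥0∞ := fun s =>
    ∫⁻ x in Ioi a, ENNReal.ofReal (Real.exp (a - x)) * ENNReal.ofReal (φ (x - s)) with hK
  have split : V φ (k+1) a
      = (∫⁻ s in Iic a, G φ k s * K s) + ∫⁻ s in Ioi a, G φ k s * K s := by
    rw [step3, ← lintegral_add_compl (fun s => G φ k s * K s) measurableSet_Iic, compl_Iic]
  have bound1 : (∫⁻ s in Ioi a, G φ k s * K s) ≤ Lap φ * V φ k a := by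
    have h1 : (∫⁻ s in Ioi a, G φ k s * K s)
        ≤ ∫⁻ s in Ioi a, Lap φ * (ENNReal.ofReal (Real.exp (a - s)) * G φ k s) := by
      apply setLIntegral_mono' measurableSet_Ioi
      intro s _
      calc G φ k s * K s ≤ G φ k s * (ENNReal.ofReal (Real.exp (a - s)) * Lap φ) :=
            mul_le_mul_right (K_le_exp a s) _
        _ = Lap φ * (ENNReal.ofReal (Real.exp (a - s)) * G φ k s) := by ring
    calc (∫⁻ s in Ioi a, G φ k s * K s)
        ≤ ∫⁻ s in Ioi a, Lap φ * (ENNReal.ofReal (Real.exp (a - s)) * G φ k s) := h1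
      _ = Lap φ * V φ k a := by
          have hmx : Measurable (fun s : ℝ => ENNReal.ofReal (Real.exp (a - s)) * G φ k s) :=
            (ENNReal.measurable_ofReal.comp
              ((Real.measurable_exp).comp (measurable_const.sub measurable_id))).mul hGm
          exact lintegral_const_mul (μ := volume.restrict (Ioi a)) (Lap φ) hmx
  have bound2 : (∫⁻ s in Iic a, G φ k s * K s) ≤ B φ k a := by
    apply setLIntegral_mono' measurableSet_Iic
    intro s _
    exact mul_le_mul_right (K_le_Phib a s) _
  calc V φ (k+1) a = (∫⁻ s in Iic a, G φ k s * K s) + ∫⁻ s in Ioi a, G φ k s * K s := split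
    _ ≤ B φ k a + Lap φ * V φ k a := add_le_add bound2 bound1
    _ = Lap φ * V φ k a + B φ k a := add_comm _ _

lemma Atel (hm : Measurable φ) (hz : ∀ t < 0, φ t = 0)
    (htot : ∫⁻ x, ENNReal.ofReal (φ x) = 1) (k : ℕ) (a : ℝ) :
    B φ k a + A φ (k + 1) a = A φ k a := by
  have hGm := Gmeas hm k
  have hum : Measurable (fun p : ℝ × ℝ => G φ k p.2 * ENNReal.ofReal (φ (p.1 - p.2))) :=
    (hGm.comp measurable_snd).mul
      (ENNReal.measurable_ofReal.comp (hm.comp (measurable_fst.sub measurable_snd)))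
  have step1 : A φ (k+1) a = ∫⁻ s, G φ k s * Phile φ (a - s) := by
    calc A φ (k+1) a = ∫⁻ x in Iic a, ∫⁻ s, G φ k s * ENNReal.ofReal (φ (x - s)) := rfl
      _ = ∫⁻ s, ∫⁻ x in Iic a, G φ k s * ENNReal.ofReal (φ (x - s)) :=
          lintegral_lintegral_swap hum.aemeasurable
      _ = ∫⁻ s, G φ k s * Phile φ (a - s) := by
          apply lintegral_congr
          intro s
          have hmx : Measurable (fun x : ℝ => ENNReal.ofReal (φ (x - s))) :=
            ENNReal.measurable_ofReal.comp (hm.comp (measurable_id.sub measurable_const))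
          have h := lintegral_const_mul (μ := volume.restrict (Iic a)) (G φ k s) hmx
          calc ∫⁻ x in Iic a, G φ k s * ENNReal.ofReal (φ (x - s))
              = G φ k s * ∫⁻ x in Iic a, ENNReal.ofReal (φ (x - s)) := h
            _ = G φ k s * Phile φ (a - s) :=
              congrArg _ (lint_shift_Iic (fun y => ENNReal.ofReal (φ y)) a s)
  have step2 : A φ (k+1) a = ∫⁻ s in Iic a, G φ k s * Phile φ (a - s) := by
    rw [step1, ← lintegral_add_compl (fun s => G φ k s * Phile φ (a - s)) measurableSet_Iic,
      compl_Iic]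
    have : ∫⁻ s in Ioi a, G φ k s * Phile φ (a - s) = 0 := by
      rw [setLIntegral_congr_fun_ae measurableSet_Ioi
        (ae_of_all _ (fun s hs => by
          rw [Phile_neg hz (by simp at hs; linarith), mul_zero]) :
          ∀ᵐ s ∂volume, s ∈ Ioi a → G φ k s * Phile φ (a - s) = (fun _ => (0:ℝ≥0∞)) s)]
      simp
    rw [this, add_zero]
  have hPhile1 : ∀ c : ℝ, Phile φ c + Phib φ c = 1 := fun c => by rw [Phi_add, htot]
  have hmB : Measurable (fun r : ℝ => G φ k r * Phib φ (a - r)) :=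
    hGm.mul (Phib_meas.comp (measurable_const.sub measurable_id))
  rw [step2, B, ← lintegral_add_left (μ := volume.restrict (Iic a)) hmB
    (fun s => G φ k s * Phile φ (a - s))]
  apply setLIntegral_congr_fun_ae measurableSet_Iic
  apply ae_of_all
  intro r _
  rw [← mul_add, add_comm (Phib φ (a - r)), hPhile1, mul_one]

end Rec


section Sums

variable {φ : ℝ → ℝ}

lemma Lap_lt_one (hm : Measurable φ) (hz : ∀ t < 0, φ t = 0)
    (htot : ∫⁻ x, ENNReal.ofReal (φ x) = 1) : Lap φ < 1 := by
  -- find c > 0 with positive tail mass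
  have htail : ∃ c : ℝ, 0 < c ∧ 0 < Phib φ c := by
    by_contra hcon
    push_neg at hcon
    have hz' : ∀ n : ℕ, Phib φ (1 / (n + 1)) = 0 := by
      intro n
      have h1 : (0:ℝ) < 1 / (n + 1) := by positivity
      exact le_antisymm (hcon _ h1) zero_le
    have hunion : Ioi (0:ℝ) = ⋃ n : ℕ, Ioi (1 / (n + 1) : ℝ) := by
      ext x
      simp only [mem_Ioi, mem_iUnion]
      constructor
      · intro hx
        obtain ⟨n, hn⟩ := exists_nat_one_div_lt hx
        exact ⟨n, hn⟩
      · rintro ⟨n, hn⟩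
        have : (0:ℝ) < 1 / (n + 1) := by positivity
        linarith
    have h1 : Phib φ 0 = 1 := by
      rw [Phib, ← lint_eq_Ioi (F := fun x => ENNReal.ofReal (φ x))
        (fun x hx => by simp [hz x hx]), htot]
    have h0 : Phib φ 0 = 0 := by
      rw [Phib, hunion]
      refine le_antisymm ?_ zero_le
      calc ∫⁻ x in ⋃ n : ℕ, Ioi (1 / (n + 1) : ℝ), ENNReal.ofReal (φ x)
          ≤ ∑' n : ℕ, ∫⁻ x in Ioi (1 / (n + 1) : ℝ), ENNReal.ofReal (φ x) :=
            lintegral_iUnion_le _ _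
        _ = 0 := by
            have h' : ∀ n : ℕ, (∫⁻ x in Ioi (1 / (n + 1) : ℝ), ENNReal.ofReal (φ x)) = 0 := hz'
            simp only [h']
            exact tsum_zero
    rw [h1] at h0
    exact one_ne_zero h0
  obtain ⟨c, hc, hPc⟩ := htail
  have hPcle : Phib φ c ≤ 1 := by
    calc Phib φ c ≤ ∫⁻ x, ENNReal.ofReal (φ x) := setLIntegral_le_lintegral _ _
      _ = 1 := htot
  have hPcne : Phib φ c ≠ ∞ := (lt_of_le_of_lt hPcle ENNReal.one_lt_top).ne
  have hXle : Phile φ c ≤ 1 := by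
    calc Phile φ c ≤ ∫⁻ x, ENNReal.ofReal (φ x) := setLIntegral_le_lintegral _ _
      _ = 1 := htot
  have hsplit : Lap φ = (∫⁻ x in Iic c, ENNReal.ofReal (Real.exp (-x)) * ENNReal.ofReal (φ x))
      + ∫⁻ x in Ioi c, ENNReal.ofReal (Real.exp (-x)) * ENNReal.ofReal (φ x) := by
    rw [Lap, ← lintegral_add_compl (fun x => ENNReal.ofReal (Real.exp (-x)) * ENNReal.ofReal (φ x))
      measurableSet_Iic, compl_Iic]
  have hb1 : (∫⁻ x in Iic c, ENNReal.ofReal (Real.exp (-x)) * ENNReal.ofReal (φ x))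
      ≤ Phile φ c := by
    apply setLIntegral_mono' measurableSet_Iic
    intro x _
    rcases lt_or_ge x 0 with hx | hx
    · simp [hz x hx]
    · calc ENNReal.ofReal (Real.exp (-x)) * ENNReal.ofReal (φ x)
          ≤ 1 * ENNReal.ofReal (φ x) := mul_le_mul_left
            (ENNReal.ofReal_le_one.mpr (Real.exp_le_one_iff.mpr (by linarith))) _
        _ = _ := one_mul _
  have hb2 : (∫⁻ x in Ioi c, ENNReal.ofReal (Real.exp (-x)) * ENNReal.ofReal (φ x))
      ≤ ENNReal.ofReal (Real.exp (-c)) * Phib φ c := by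
    rw [Phib, ← lintegral_const_mul' _ _ ENNReal.ofReal_ne_top]
    apply setLIntegral_mono' measurableSet_Ioi
    intro x hx
    exact mul_le_mul_left (ENNReal.ofReal_le_ofReal
      (Real.exp_le_exp.mpr (by simp at hx; linarith))) _
  have hstrict : ENNReal.ofReal (Real.exp (-c)) * Phib φ c < Phib φ c := by
    have h1 : ENNReal.ofReal (Real.exp (-c)) < 1 :=
      ENNReal.ofReal_lt_one.mpr (Real.exp_lt_one_iff.mpr (by linarith))
    calc ENNReal.ofReal (Real.exp (-c)) * Phib φ c < 1 * Phib φ c :=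
        ENNReal.mul_lt_mul_left hPc.ne' hPcne h1
      _ = Phib φ c := one_mul _
  have hXne : Phile φ c ≠ ∞ := (lt_of_le_of_lt hXle ENNReal.one_lt_top).ne
  calc Lap φ ≤ Phile φ c + ENNReal.ofReal (Real.exp (-c)) * Phib φ c := by
        rw [hsplit]; exact add_le_add hb1 hb2
    _ < Phile φ c + Phib φ c := by
        exact ENNReal.add_lt_add_left hXne hstrict
    _ = 1 := by rw [Phi_add, htot]

lemma Cc_ineq (hm : Measurable φ) (hz : ∀ t < 0, φ t = 0)
    (htot : ∫⁻ x, ENNReal.ofReal (φ x) = 1) :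
    2 + Lap φ * Cc φ ≤ Cc φ := by
  have hL := Lap_lt_one hm hz htot
  have hLne : Lap φ ≠ ∞ := hL.ne_top
  set Lr := (Lap φ).toReal with hLr
  have hLr0 : 0 ≤ Lr := ENNReal.toReal_nonneg
  have hLr1 : Lr < 1 := by
    have := (ENNReal.toReal_lt_toReal hLne ENNReal.one_ne_top).mpr hL
    simpa using this
  have hden : (0:ℝ) < 1 - Lr := by linarith
  have hCr : (0:ℝ) ≤ 2 / (1 - Lr) := by positivity
  have hLofReal : Lap φ = ENNReal.ofReal Lr := (ENNReal.ofReal_toReal hLne).symm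
  have hCc : Cc φ = ENNReal.ofReal (2 / (1 - Lr)) := rfl
  rw [hCc, hLofReal, ← ENNReal.ofReal_mul hLr0]
  rw [show (2:ℝ≥0∞) = ENNReal.ofReal 2 by simp, ← ENNReal.ofReal_add (by norm_num)
    (mul_nonneg hLr0 hCr)]
  apply ENNReal.ofReal_le_ofReal
  rw [show (2:ℝ) + Lr * (2 / (1 - Lr)) = 2 / (1 - Lr) by field_simp; ring]

lemma BAsum (hm : Measurable φ) (hz : ∀ t < 0, φ t = 0)
    (htot : ∫⁻ x, ENNReal.ofReal (φ x) = 1) (a : ℝ) (n : ℕ) :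
    (∑ k ∈ Finset.range n, B φ k a) + A φ n a = A φ 0 a := by
  induction n with
  | zero => simp
  | succ m ih =>
      rw [Finset.sum_range_succ, add_assoc, Atel hm hz htot m a]
      exact ih

lemma Bsum_le_one (hm : Measurable φ) (hz : ∀ t < 0, φ t = 0)
    (htot : ∫⁻ x, ENNReal.ofReal (φ x) = 1) (a : ℝ) (n : ℕ) :
    (∑ k ∈ Finset.range n, B φ k a) ≤ 1 := by
  calc (∑ k ∈ Finset.range n, B φ k a) ≤ (∑ k ∈ Finset.range n, B φ k a) + A φ n a :=
      le_self_add
    _ = A φ 0 a := BAsum hm hz htot a n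
    _ ≤ 1 := A_le_one hm htot 0 a

lemma Vsum_le (hm : Measurable φ) (hz : ∀ t < 0, φ t = 0)
    (htot : ∫⁻ x, ENNReal.ofReal (φ x) = 1) (a : ℝ) (n : ℕ) :
    (∑ k ∈ Finset.range n, V φ k a) ≤ Cc φ := by
  induction n with
  | zero =>
      simp
  | succ m ih =>
      have hstep : (∑ k ∈ Finset.range (m+1), V φ k a)
          = V φ 0 a + ∑ k ∈ Finset.range m, V φ (k+1) a := by
        rw [Finset.sum_range_succ']
        exact add_comm _ _
      have h2 : (∑ k ∈ Finset.range m, V φ (k+1) a)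
          ≤ Lap φ * (∑ k ∈ Finset.range m, V φ k a) + ∑ k ∈ Finset.range m, B φ k a := by
        calc (∑ k ∈ Finset.range m, V φ (k+1) a)
            ≤ ∑ k ∈ Finset.range m, (Lap φ * V φ k a + B φ k a) :=
              Finset.sum_le_sum fun k _ => Vrec hm k a
          _ = Lap φ * (∑ k ∈ Finset.range m, V φ k a) + ∑ k ∈ Finset.range m, B φ k a := by
              rw [Finset.sum_add_distrib, Finset.mul_sum]
      calc (∑ k ∈ Finset.range (m+1), V φ k a)
          = V φ 0 a + ∑ k ∈ Finset.range m, V φ (k+1) a := hstep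
        _ ≤ 1 + (Lap φ * (∑ k ∈ Finset.range m, V φ k a) + ∑ k ∈ Finset.range m, B φ k a) :=
            add_le_add (V_le_one hm htot 0 a) h2
        _ ≤ 1 + (Lap φ * Cc φ + 1) := by
            apply add_le_add_right
            exact add_le_add (mul_le_mul_right ih _) (Bsum_le_one hm hz htot a m)
        _ = 2 + Lap φ * Cc φ := by ring
        _ ≤ Cc φ := Cc_ineq hm hz htot

lemma Vtsum (hm : Measurable φ) (hz : ∀ t < 0, φ t = 0)
    (htot : ∫⁻ x, ENNReal.ofReal (φ x) = 1) (a : ℝ) :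
    (∑' k : ℕ, V φ k a) ≤ Cc φ := by
  rw [ENNReal.tsum_eq_iSup_sum]
  apply iSup_le
  intro s
  calc (∑ k ∈ s, V φ k a) ≤ ∑ k ∈ Finset.range ((s.sup id).succ), V φ k a :=
      Finset.sum_le_sum_of_subset s.subset_range_sup_succ
    _ ≤ Cc φ := Vsum_le hm hz htot a _

lemma window (k : ℕ) (a c : ℝ) :
    (∫⁻ x in Ioc a (a + c), G φ k x) ≤ ENNReal.ofReal (Real.exp c) * V φ k a := by
  rw [← lintegral_indicator measurableSet_Ioc]
  have hVeq : ENNReal.ofReal (Real.exp c) * V φ k a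
      = ∫⁻ x, (Ioi a).indicator
          (fun x => ENNReal.ofReal (Real.exp c) * (ENNReal.ofReal (Real.exp (a - x)) * G φ k x)) x := by
    rw [lintegral_indicator measurableSet_Ioi, V,
      ← lintegral_const_mul' _ _ ENNReal.ofReal_ne_top]
  rw [hVeq]
  apply lintegral_mono
  intro x
  by_cases hx : x ∈ Ioc a (a + c)
  · rw [indicator_of_mem hx, indicator_of_mem (mem_Ioi.mpr hx.1)]
    have h1 : (1:ℝ) ≤ Real.exp c * Real.exp (a - x) := by
      rw [← Real.exp_add]
      have : (0:ℝ) ≤ c + (a - x) := by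
        have := hx.2; linarith
      calc (1:ℝ) = Real.exp 0 := (Real.exp_zero).symm
        _ ≤ _ := Real.exp_le_exp.mpr this
    calc G φ k x = 1 * G φ k x := (one_mul _).symm
      _ ≤ (ENNReal.ofReal (Real.exp c) * ENNReal.ofReal (Real.exp (a - x))) * G φ k x := by
          apply mul_le_mul_left
          rw [← ENNReal.ofReal_mul (Real.exp_nonneg _)]
          exact ENNReal.one_le_ofReal.mpr h1
      _ = ENNReal.ofReal (Real.exp c) * (ENNReal.ofReal (Real.exp (a - x)) * G φ k x) :=
          mul_assoc _ _ _
  · rw [indicator_of_notMem hx]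
    exact zero_le

end Sums


/-! ### the `f`-weighted integrals -/

noncomputable def J (φ f : ℝ → ℝ) (k : ℕ) (t : ℝ) : ℝ≥0∞ :=
  ∫⁻ s, ENNReal.ofReal (f (t + s)) * G φ k s

section Jsec

variable {φ f : ℝ → ℝ}

lemma Jmeas (hm : Measurable φ) (hfm : Measurable f) (k : ℕ) :
    Measurable (fun t => J φ f k t) := by
  have : Measurable (fun p : ℝ × ℝ => ENNReal.ofReal (f (p.1 + p.2)) * G φ k p.2) :=
    (ENNReal.measurable_ofReal.comp (hfm.comp (measurable_fst.add measurable_snd))).mul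
      ((Gmeas hm k).comp measurable_snd)
  exact this.lintegral_prod_right'

lemma J_restrict (hz : ∀ t < 0, φ t = 0) (k : ℕ) (t : ℝ) :
    J φ f k t = ∫⁻ s in Ioi (0:ℝ), ENNReal.ofReal (f (t + s)) * G φ k s := by
  exact lint_eq_Ioi fun x hx => by rw [Gzero hz k x hx, mul_zero]

lemma Jbound (hz : ∀ t < 0, φ t = 0) {M b : ℝ}
    (hfM : ∀ t, f t ≤ M) (hfb : ∀ t, t ∉ Icc (0 : ℝ) b → f t = 0)
    (hf0 : ∀ t, 0 ≤ f t) (k : ℕ) (t : ℝ) :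
    J φ f k t ≤ ENNReal.ofReal M *
      (ENNReal.ofReal (Real.exp (b + 1)) * V φ k (max (-t - 1) 0)) := by
  set a : ℝ := max (-t - 1) 0 with ha
  have ha0 : 0 ≤ a := le_max_right _ _
  have hpt : ∀ᵐ s : ℝ, ENNReal.ofReal (f (t + s)) * G φ k s
      ≤ ENNReal.ofReal M * (Ioc a (a + (b + 1))).indicator (G φ k) s := by
    have hne : {s : ℝ | ¬ (ENNReal.ofReal (f (t + s)) * G φ k s
        ≤ ENNReal.ofReal M * (Ioc a (a + (b + 1))).indicator (G φ k) s)} ⊆ {0} := by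
      intro s hs
      simp only [mem_setOf_eq] at hs
      by_contra hs0
      apply hs
      have hs0' : s ≠ 0 := by simpa using hs0
      by_cases hmem : s ∈ Ioc a (a + (b + 1))
      · rw [indicator_of_mem hmem]
        exact mul_le_mul' (ENNReal.ofReal_le_ofReal (hfM _)) le_rfl
      · rw [indicator_of_notMem hmem, mul_zero]
        rcases lt_trichotomy s 0 with hlt | heq | hgt
        · rw [Gzero hz k s hlt, mul_zero]
        · exact absurd heq hs0'
        · have hf : f (t + s) = 0 := by
            apply hfb
            intro hmem2
            apply hmem
            obtain ⟨h1, h2⟩ := hmem2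
            constructor
            · rcases max_cases (-t - 1) 0 with ⟨hval, _⟩ | ⟨hval, _⟩ <;> rw [ha, hval] <;> linarith
            · rcases max_cases (-t - 1) 0 with ⟨hval, _⟩ | ⟨hval, hge⟩ <;> rw [ha, hval] <;> linarith
          rw [hf, ENNReal.ofReal_zero, zero_mul]
    exact (ae_iff).mpr (measure_mono_null hne Real.volume_singleton)
  calc J φ f k t ≤ ∫⁻ s, ENNReal.ofReal M * (Ioc a (a + (b + 1))).indicator (G φ k) s :=
      lintegral_mono_ae hpt
    _ = ENNReal.ofReal M * ∫⁻ s, (Ioc a (a + (b + 1))).indicator (G φ k) s :=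
      lintegral_const_mul' _ _ ENNReal.ofReal_ne_top
    _ = ENNReal.ofReal M * ∫⁻ s in Ioc a (a + (b + 1)), G φ k s := by
      rw [lintegral_indicator measurableSet_Ioc]
    _ ≤ ENNReal.ofReal M * (ENNReal.ofReal (Real.exp (b + 1)) * V φ k a) :=
      mul_le_mul_right (window k a (b + 1)) _

lemma Jtsum (hm : Measurable φ) (hz : ∀ t < 0, φ t = 0)
    (htot : ∫⁻ x, ENNReal.ofReal (φ x) = 1) {M b : ℝ}
    (hfM : ∀ t, f t ≤ M) (hfb : ∀ t, t ∉ Icc (0 : ℝ) b → f t = 0)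
    (hf0 : ∀ t, 0 ≤ f t) (t : ℝ) :
    (∑' k : ℕ, J φ f k t)
      ≤ ENNReal.ofReal M * (ENNReal.ofReal (Real.exp (b + 1)) * Cc φ) := by
  calc (∑' k : ℕ, J φ f k t)
      ≤ ∑' k : ℕ, ENNReal.ofReal M *
          (ENNReal.ofReal (Real.exp (b + 1)) * V φ k (max (-t - 1) 0)) :=
        ENNReal.tsum_le_tsum fun k => Jbound hz hfM hfb hf0 k t
    _ = ENNReal.ofReal M * (ENNReal.ofReal (Real.exp (b + 1))
          * ∑' k : ℕ, V φ k (max (-t - 1) 0)) := by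
        rw [ENNReal.tsum_mul_left, ENNReal.tsum_mul_left]
    _ ≤ _ := mul_le_mul_right (mul_le_mul_right (Vtsum hm hz htot _) _) _

lemma Jstep (hm : Measurable φ) (hfm : Measurable f) (k : ℕ) (t : ℝ) :
    (∫⁻ s, J φ f k (t + s) * ENNReal.ofReal (φ s)) = J φ f (k + 1) t := by
  have hGm := Gmeas hm k
  have step1 : (∫⁻ s, J φ f k (t + s) * ENNReal.ofReal (φ s))
      = ∫⁻ s, ∫⁻ r, ENNReal.ofReal (f (t + s + r)) * G φ k r * ENNReal.ofReal (φ s) := by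
    apply lintegral_congr
    intro s
    have hmx : Measurable (fun r : ℝ => ENNReal.ofReal (f (t + s + r)) * G φ k r) :=
      (ENNReal.measurable_ofReal.comp (hfm.comp (measurable_const.add measurable_id))).mul hGm
    exact (lintegral_mul_const _ hmx).symm
  have hum : Measurable (fun p : ℝ × ℝ =>
      ENNReal.ofReal (f (t + p.1 + p.2)) * G φ k p.2 * ENNReal.ofReal (φ p.1)) := by
    refine Measurable.mul (Measurable.mul ?_ ?_) ?_
    · exact ENNReal.measurable_ofReal.comp
        (hfm.comp ((measurable_const.add measurable_fst).add measurable_snd))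
    · exact hGm.comp measurable_snd
    · exact ENNReal.measurable_ofReal.comp (hm.comp measurable_fst)
  have step2 : (∫⁻ s, ∫⁻ r, ENNReal.ofReal (f (t + s + r)) * G φ k r * ENNReal.ofReal (φ s))
      = ∫⁻ r, ∫⁻ s, ENNReal.ofReal (f (t + s + r)) * G φ k r * ENNReal.ofReal (φ s) :=
    lintegral_lintegral_swap hum.aemeasurable
  have step3 : ∀ r : ℝ, (∫⁻ s, ENNReal.ofReal (f (t + s + r)) * G φ k r * ENNReal.ofReal (φ s))
      = ∫⁻ w, ENNReal.ofReal (f (t + w)) * G φ k r * ENNReal.ofReal (φ (w - r)) := by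
    intro r
    have h := lint_shift (fun w => ENNReal.ofReal (f (t + w)) * G φ k r
      * ENNReal.ofReal (φ (w - r))) (-r)
    calc (∫⁻ s, ENNReal.ofReal (f (t + s + r)) * G φ k r * ENNReal.ofReal (φ s))
        = ∫⁻ s, ENNReal.ofReal (f (t + (s - -r))) * G φ k r
            * ENNReal.ofReal (φ ((s - -r) - r)) := by
          apply lintegral_congr
          intro s
          have e1 : t + (s - -r) = t + s + r := by ring
          have e2 : (s - -r) - r = s := by ring
          rw [e1, e2]
      _ = ∫⁻ w, ENNReal.ofReal (f (t + w)) * G φ k r * ENNReal.ofReal (φ (w - r)) := h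
  have hum2 : Measurable (fun p : ℝ × ℝ =>
      ENNReal.ofReal (f (t + p.2)) * G φ k p.1 * ENNReal.ofReal (φ (p.2 - p.1))) := by
    refine Measurable.mul (Measurable.mul ?_ ?_) ?_
    · exact ENNReal.measurable_ofReal.comp (hfm.comp (measurable_const.add measurable_snd))
    · exact hGm.comp measurable_fst
    · exact ENNReal.measurable_ofReal.comp (hm.comp (measurable_snd.sub measurable_fst))
  have step4 : (∫⁻ r, ∫⁻ w, ENNReal.ofReal (f (t + w)) * G φ k r * ENNReal.ofReal (φ (w - r)))
      = ∫⁻ w, ∫⁻ r, ENNReal.ofReal (f (t + w)) * G φ k r * ENNReal.ofReal (φ (w - r)) :=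
    lintegral_lintegral_swap hum2.aemeasurable
  have step5 : ∀ w : ℝ, (∫⁻ r, ENNReal.ofReal (f (t + w)) * G φ k r * ENNReal.ofReal (φ (w - r)))
      = ENNReal.ofReal (f (t + w)) * G φ (k+1) w := by
    intro w
    have hmx : Measurable (fun r : ℝ => G φ k r * ENNReal.ofReal (φ (w - r))) :=
      hGm.mul (ENNReal.measurable_ofReal.comp (hm.comp (measurable_const.sub measurable_id)))
    have h := lintegral_const_mul (μ := volume) (ENNReal.ofReal (f (t + w))) hmx
    calc (∫⁻ r, ENNReal.ofReal (f (t + w)) * G φ k r * ENNReal.ofReal (φ (w - r)))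
        = ∫⁻ r, ENNReal.ofReal (f (t + w)) * (G φ k r * ENNReal.ofReal (φ (w - r))) :=
          lintegral_congr fun r => mul_assoc _ _ _
      _ = ENNReal.ofReal (f (t + w)) * ∫⁻ r, G φ k r * ENNReal.ofReal (φ (w - r)) := h
      _ = ENNReal.ofReal (f (t + w)) * G φ (k+1) w := by rw [G_succ]
  rw [step1, step2]
  calc (∫⁻ r, ∫⁻ s, ENNReal.ofReal (f (t + s + r)) * G φ k r * ENNReal.ofReal (φ s))
      = ∫⁻ r, ∫⁻ w, ENNReal.ofReal (f (t + w)) * G φ k r * ENNReal.ofReal (φ (w - r)) :=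
        lintegral_congr step3
    _ = ∫⁻ w, ∫⁻ r, ENNReal.ofReal (f (t + w)) * G φ k r * ENNReal.ofReal (φ (w - r)) := step4
    _ = ∫⁻ w, ENNReal.ofReal (f (t + w)) * G φ (k+1) w := lintegral_congr step5
    _ = J φ f (k+1) t := rfl

end Jsec

end Stmt19

theorem stmt19
    (φ : ℝ → ℝ) (hφ_meas : Measurable φ) (hφ_nonneg : ∀ t, 0 ≤ φ t)
    (hφ_zero : ∀ t < 0, φ t = 0)
    (hφ_int : ∫ t in Set.Ioi (0 : ℝ), φ t = 1)
    (f : ℝ → ℝ) (hf_meas : Measurable f) (hf_nonneg : ∀ t, 0 ≤ f t)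
    (hf_bdd : ∃ M, ∀ t, f t ≤ M)
    (hf_supp : ∃ b : ℝ, ∀ t, t ∉ Icc (0 : ℝ) b → f t = 0) :
    (∀ T ≥ (0 : ℝ),
      Summable (fun k : ℕ => ∫ s in Set.Ioc (0 : ℝ) T, convIter φ k s)) ∧
    (∀ t : ℝ, Summable
      (fun k : ℕ => ∫ s in Set.Ioi (0 : ℝ), f (t + s) * convIter φ k s)) ∧
    (∀ h : ℝ → ℝ,
      (∀ t, h t = f t +
        ∑' k : ℕ, ∫ s in Set.Ioi (0 : ℝ), f (t + s) * convIter φ k s) →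
      (∃ M, ∀ t, |h t| ≤ M) ∧
      (∀ t ≥ (0 : ℝ), h t = f t + ∫ s in Set.Ioi (0 : ℝ), h (t + s) * φ s)) := by
  classical
  obtain ⟨M, hM⟩ := hf_bdd
  obtain ⟨b, hb⟩ := hf_supp
  have htot := Stmt19.total hφ_meas hφ_nonneg hφ_zero hφ_int
  -- part 1
  have part1 : ∀ T ≥ (0:ℝ),
      Summable (fun k : ℕ => ∫ s in Set.Ioc (0 : ℝ) T, convIter φ k s) := by
    intro T _
    have hterm : ∀ k : ℕ, (∫ s in Set.Ioc (0 : ℝ) T, convIter φ k s)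
        = (∫⁻ s in Set.Ioc (0 : ℝ) T, Stmt19.G φ k s).toReal := by
      intro k
      simp only [Stmt19.conv_eq hφ_meas hφ_nonneg htot]
      exact integral_toReal ((Stmt19.Gmeas hφ_meas k).aemeasurable.restrict)
        (ae_restrict_of_ae (Stmt19.aefin hφ_meas htot k))
    have hsum : (∑' k : ℕ, ∫⁻ s in Set.Ioc (0:ℝ) T, Stmt19.G φ k s) ≠ ∞ := by
      have hle : (∑' k : ℕ, ∫⁻ s in Set.Ioc (0:ℝ) T, Stmt19.G φ k s)
          ≤ ENNReal.ofReal (Real.exp T) * Stmt19.Cc φ := by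
        calc (∑' k : ℕ, ∫⁻ s in Set.Ioc (0:ℝ) T, Stmt19.G φ k s)
            ≤ ∑' k : ℕ, ENNReal.ofReal (Real.exp T) * Stmt19.V φ k 0 := by
              apply ENNReal.tsum_le_tsum
              intro k
              have hw := Stmt19.window (φ := φ) k 0 T
              rwa [zero_add] at hw
          _ = ENNReal.ofReal (Real.exp T) * ∑' k : ℕ, Stmt19.V φ k 0 :=
              ENNReal.tsum_mul_left
          _ ≤ _ := mul_le_mul_right (Stmt19.Vtsum hφ_meas hφ_zero htot 0) _
      exact ne_top_of_le_ne_top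
        (ENNReal.mul_ne_top ENNReal.ofReal_ne_top ENNReal.ofReal_ne_top) hle
    exact (ENNReal.summable_toReal hsum).congr fun k => (hterm k).symm
  -- the basic identification of the real integrals with `J`
  have hIeq : ∀ (k : ℕ) (t : ℝ), (∫ s in Set.Ioi (0:ℝ), f (t + s) * convIter φ k s)
      = (Stmt19.J φ f k t).toReal := by
    intro k t
    have h1 : (∫ s in Set.Ioi (0:ℝ), f (t + s) * convIter φ k s)
        = ∫ s in Set.Ioi (0:ℝ), (ENNReal.ofReal (f (t + s)) * Stmt19.G φ k s).toReal := by
      apply integral_congr_ae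
      apply ae_of_all
      intro s
      dsimp only
      rw [ENNReal.toReal_mul, ENNReal.toReal_ofReal (hf_nonneg _),
        Stmt19.conv_eq hφ_meas hφ_nonneg htot]
    have hmeas : AEMeasurable (fun s : ℝ => ENNReal.ofReal (f (t + s)) * Stmt19.G φ k s)
        (volume.restrict (Ioi (0:ℝ))) :=
      ((ENNReal.measurable_ofReal.comp (hf_meas.comp
          (measurable_const.add measurable_id))).mul
        (Stmt19.Gmeas hφ_meas k)).aemeasurable.restrict
    have hfin : ∀ᵐ s ∂(volume.restrict (Ioi (0:ℝ))),
        ENNReal.ofReal (f (t + s)) * Stmt19.G φ k s < ⊤ := by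
      apply ae_restrict_of_ae
      filter_upwards [Stmt19.aefin hφ_meas htot k] with s hs
      exact ENNReal.mul_lt_top ENNReal.ofReal_lt_top hs
    rw [h1, Stmt19.J_restrict hφ_zero k t]
    exact integral_toReal hmeas hfin
  have hJtsum : ∀ t : ℝ, (∑' k : ℕ, Stmt19.J φ f k t)
      ≤ ENNReal.ofReal M * (ENNReal.ofReal (Real.exp (b + 1)) * Stmt19.Cc φ) :=
    fun t => Stmt19.Jtsum hφ_meas hφ_zero htot hM hb hf_nonneg t
  have hDne : ENNReal.ofReal M * (ENNReal.ofReal (Real.exp (b + 1)) * Stmt19.Cc φ) ≠ ∞ :=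
    ENNReal.mul_ne_top ENNReal.ofReal_ne_top
      (ENNReal.mul_ne_top ENNReal.ofReal_ne_top ENNReal.ofReal_ne_top)
  have hSfin : ∀ t : ℝ, (∑' k : ℕ, Stmt19.J φ f k t) ≠ ∞ :=
    fun t => ne_top_of_le_ne_top hDne (hJtsum t)
  have part2 : ∀ t : ℝ, Summable
      (fun k : ℕ => ∫ s in Set.Ioi (0:ℝ), f (t + s) * convIter φ k s) := by
    intro t
    exact (ENNReal.summable_toReal (hSfin t)).congr fun k => (hIeq k t).symm
  refine ⟨part1, part2, ?_⟩
  intro h hh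
  set S : ℝ → ℝ≥0∞ := fun t => ∑' k : ℕ, Stmt19.J φ f k t with hS
  have hSfin' : ∀ t, S t ≠ ∞ := hSfin
  have hJfin : ∀ (k : ℕ) (t : ℝ), Stmt19.J φ f k t ≠ ∞ := fun k t =>
    ne_top_of_le_ne_top (hSfin' t) (ENNReal.le_tsum k)
  have hheq : ∀ t, h t = f t + (S t).toReal := by
    intro t
    rw [hh t]
    congr 1
    calc (∑' k : ℕ, ∫ s in Set.Ioi (0:ℝ), f (t + s) * convIter φ k s)
        = ∑' k : ℕ, (Stmt19.J φ f k t).toReal := tsum_congr fun k => hIeq k t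
      _ = (S t).toReal := (ENNReal.tsum_toReal_eq (fun k => hJfin k t)).symm
  constructor
  · refine ⟨M + (ENNReal.ofReal M * (ENNReal.ofReal (Real.exp (b + 1))
      * Stmt19.Cc φ)).toReal, ?_⟩
    intro t
    have hnn : 0 ≤ h t := by
      rw [hheq t]
      exact add_nonneg (hf_nonneg t) ENNReal.toReal_nonneg
    rw [abs_of_nonneg hnn, hheq t]
    exact add_le_add (hM t) (ENNReal.toReal_mono hDne (hJtsum t))
  · intro t _
    set H : ℝ → ℝ≥0∞ := fun x => ENNReal.ofReal (f x) + S x with hH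
    have hHfin : ∀ x, H x ≠ ∞ := fun x =>
      ENNReal.add_ne_top.mpr ⟨ENNReal.ofReal_ne_top, hSfin' x⟩
    have hHmeas : Measurable H :=
      (ENNReal.measurable_ofReal.comp hf_meas).add
        (Measurable.ennreal_tsum fun k => Stmt19.Jmeas hφ_meas hf_meas k)
    have hhH : ∀ x, h x = (H x).toReal := by
      intro x
      rw [hheq x]
      simp only [hH]
      rw [ENNReal.toReal_add ENNReal.ofReal_ne_top (hSfin' x),
        ENNReal.toReal_ofReal (hf_nonneg x)]
    have hint : (∫ s in Set.Ioi (0:ℝ), h (t + s) * φ s)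
        = (∫⁻ s in Set.Ioi (0:ℝ), H (t + s) * ENNReal.ofReal (φ s)).toReal := by
      have h1 : (∫ s in Set.Ioi (0:ℝ), h (t + s) * φ s)
          = ∫ s in Set.Ioi (0:ℝ), (H (t + s) * ENNReal.ofReal (φ s)).toReal := by
        apply integral_congr_ae
        apply ae_of_all
        intro s
        dsimp only
        rw [ENNReal.toReal_mul, ENNReal.toReal_ofReal (hφ_nonneg s), hhH]
      have hmeas2 : AEMeasurable (fun s : ℝ => H (t + s) * ENNReal.ofReal (φ s))
          (volume.restrict (Ioi (0:ℝ))) :=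
        ((hHmeas.comp (measurable_const.add measurable_id)).mul
          (ENNReal.measurable_ofReal.comp hφ_meas)).aemeasurable.restrict
      have hfin2 : ∀ᵐ s ∂(volume.restrict (Ioi (0:ℝ))),
          H (t + s) * ENNReal.ofReal (φ s) < ⊤ :=
        ae_of_all _ fun s => ENNReal.mul_lt_top
          (lt_top_iff_ne_top.mpr (hHfin _)) ENNReal.ofReal_lt_top
      rw [h1]
      exact integral_toReal hmeas2 hfin2
    have hlin : (∫⁻ s in Set.Ioi (0:ℝ), H (t + s) * ENNReal.ofReal (φ s)) = S t := by
      have hzero : ∀ s : ℝ, s < 0 → H (t + s) * ENNReal.ofReal (φ s) = 0 := by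
        intro s hs
        rw [hφ_zero s hs, ENNReal.ofReal_zero, mul_zero]
      rw [← Stmt19.lint_eq_Ioi hzero]
      have hexpand : (∫⁻ s, H (t + s) * ENNReal.ofReal (φ s))
          = (∫⁻ s, ENNReal.ofReal (f (t + s)) * ENNReal.ofReal (φ s))
            + ∫⁻ s, S (t + s) * ENNReal.ofReal (φ s) := by
        rw [← lintegral_add_left (μ := volume)
          (f := fun s => ENNReal.ofReal (f (t + s)) * ENNReal.ofReal (φ s))
          ((ENNReal.measurable_ofReal.comp (hf_meas.comp
            (measurable_const.add measurable_id))).mul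
            (ENNReal.measurable_ofReal.comp hφ_meas))
          (fun s => S (t + s) * ENNReal.ofReal (φ s))]
        apply lintegral_congr
        intro s
        simp only [hH]
        rw [add_mul]
      rw [hexpand]
      have hfirst : (∫⁻ s, ENNReal.ofReal (f (t + s)) * ENNReal.ofReal (φ s))
          = Stmt19.J φ f 0 t := rfl
      have hsecond : (∫⁻ s, S (t + s) * ENNReal.ofReal (φ s))
          = ∑' k : ℕ, Stmt19.J φ f (k + 1) t := by
        calc (∫⁻ s, S (t + s) * ENNReal.ofReal (φ s))
            = ∫⁻ s, ∑' k : ℕ, Stmt19.J φ f k (t + s) * ENNReal.ofReal (φ s) := by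
              apply lintegral_congr
              intro s
              simp only [hS]
              exact ENNReal.tsum_mul_right.symm
          _ = ∑' k : ℕ, ∫⁻ s, Stmt19.J φ f k (t + s) * ENNReal.ofReal (φ s) :=
              lintegral_tsum fun k => (((Stmt19.Jmeas hφ_meas hf_meas k).comp
                (measurable_const.add measurable_id)).mul
                (ENNReal.measurable_ofReal.comp hφ_meas)).aemeasurable
          _ = ∑' k : ℕ, Stmt19.J φ f (k + 1) t :=
              tsum_congr fun k => Stmt19.Jstep hφ_meas hf_meas k t
      rw [hfirst, hsecond]
      have hza : (∑' k : ℕ, Stmt19.J φ f k t)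
          = Stmt19.J φ f 0 t + ∑' k : ℕ, Stmt19.J φ f (k + 1) t :=
        tsum_eq_zero_add' (f := fun k => Stmt19.J φ f k t) ENNReal.summable
      exact hza.symm
    rw [hhH t, hint, hlin]
    simp only [hH]
    rw [ENNReal.toReal_add ENNReal.ofReal_ne_top (hSfin' t),
      ENNReal.toReal_ofReal (hf_nonneg t)]
end
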